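/- arXiv:2507.13711 — 2 statements merged into one kernel-verified Lean document; each statement's English description precedes it below -/
import Mathlib

section
/- Let k be an admissible kernel with parameters (s, κ₁, κ₂), s ∈ (0,1), κ₂ ≥ κ₁ > 0. Given λ, R > 0, let v(x) := e^{λx₁} χ_{B_{2R}}(x) for x ∈ ℝⁿ. Then there exists a constant C ≥ 1, depending only on n, s, κ₁, and κ₂, such that if λR ≥ C, then L_k v(x) ≤ −(1/C) · (e^{λR/2} / (λ R^{1+2s})) · v(x) for every x ∈ B_R. -/
open Filter MeasureTheory Metric Set
open scoped Topology NNReal ENNReal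

noncomputable section

/-- `ℝⁿ` with its Euclidean structure. -/
abbrev Euc (n : ℕ) : Type := EuclideanSpace ℝ (Fin n)

/-- An admissible kernel with parameters `(s, κ₁, κ₂)`: symmetric and comparable to
`|z| ^ (-n - 2s)`. -/
def IsAdmissibleKernel (n : ℕ) (s κ₁ κ₂ : ℝ) (k : Euc n → ℝ) : Prop :=
  Measurable k ∧ (∀ z, k (-z) = k z) ∧
    ∀ᵐ z ∂(volume : Measure (Euc n)),
      κ₁ / ‖z‖ ^ ((n : ℝ) + 2 * s) ≤ k z ∧ k z ≤ κ₂ / ‖z‖ ^ ((n : ℝ) + 2 * s)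

/-- The truncated integrals whose limit defines the principal value `L_k u (x)`. -/
def LkTrunc {n : ℕ} (k u : Euc n → ℝ) (x : Euc n) (ε : ℝ) : ℝ :=
  ∫ z in {z : Euc n | ε ≤ ‖z‖}, (u x - u (x + z)) * k z

/-- `L_k u (x) = L`, in the principal value sense. -/
def LkHas {n : ℕ} (k u : Euc n → ℝ) (x : Euc n) (L : ℝ) : Prop :=
  Tendsto (LkTrunc k u x) (𝓝[>] (0 : ℝ)) (𝓝 L)

/-- The principal value defining `L_k u (x)` exists. -/
def LkExistsAt {n : ℕ} (k u : Euc n → ℝ) (x : Euc n) : Prop := ∃ L, LkHas k u x L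

/-- The nonlocal operator `L_k`, as a principal value. -/
def Lk {n : ℕ} (k u : Euc n → ℝ) (x : Euc n) : ℝ :=
  limUnder (𝓝[>] (0 : ℝ)) (LkTrunc k u x)

/-- The second differential of `u`. -/
def D2 {n : ℕ} (u : Euc n → ℝ) : Euc n → Euc n →L[ℝ] Euc n →L[ℝ] ℝ :=
  fderiv ℝ (fderiv ℝ u)

/-- The Laplacian of `u`. -/
def lapl {n : ℕ} (u : Euc n → ℝ) (x : Euc n) : ℝ :=
  ∑ i : Fin n, D2 u x (EuclideanSpace.single i (1 : ℝ)) (EuclideanSpace.single i (1 : ℝ))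

/-- Distance to the boundary of `Ω`. -/
def dB {n : ℕ} (Ω : Set (Euc n)) (x : Euc n) : ℝ := infDist x (frontier Ω)

/-- `d_{x,y} = min (d_x, d_y)`. -/
def dB2 {n : ℕ} (Ω : Set (Euc n)) (x y : Euc n) : ℝ := min (dB Ω x) (dB Ω y)

/-- The set of values `w x * ‖v x‖`, `x ∈ Ω`. -/
def wSupSet {n : ℕ} {X : Type*} [NormedAddCommGroup X] (Ω : Set (Euc n)) (w : Euc n → ℝ)
    (v : Euc n → X) : Set ℝ :=
  {r | ∃ x ∈ Ω, r = w x * ‖v x‖}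

/-- `sup_{x ∈ Ω} w x * ‖v x‖`. -/
def wSup {n : ℕ} {X : Type*} [NormedAddCommGroup X] (Ω : Set (Euc n)) (w : Euc n → ℝ)
    (v : Euc n → X) : ℝ :=
  sSup (wSupSet Ω w v)

/-- The set of values `w x y * ‖v x - v y‖ / ‖x - y‖ ^ β`, `x ≠ y ∈ Ω`. -/
def wHolderSet {n : ℕ} {X : Type*} [NormedAddCommGroup X] (Ω : Set (Euc n))
    (w : Euc n → Euc n → ℝ) (β : ℝ) (v : Euc n → X) : Set ℝ :=
  {r | ∃ x ∈ Ω, ∃ y ∈ Ω, x ≠ y ∧ r = w x y * (‖v x - v y‖ / ‖x - y‖ ^ β)}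

/-- Weighted Hölder seminorm of exponent `β` and weight `w`. -/
def wHolder {n : ℕ} {X : Type*} [NormedAddCommGroup X] (Ω : Set (Euc n))
    (w : Euc n → Euc n → ℝ) (β : ℝ) (v : Euc n → X) : ℝ :=
  sSup (wHolderSet Ω w β v)

/-- The (unweighted) `C^β(Ω)` norm. -/
def normCbeta {n : ℕ} {X : Type*} [NormedAddCommGroup X] (Ω : Set (Euc n)) (β : ℝ)
    (v : Euc n → X) : ℝ :=
  wSup Ω (fun _ => 1) v + wHolder Ω (fun _ _ => 1) β v

/-- Membership in (unweighted) `C^β(Ω)`: bounded and uniformly `β`-Hölder. -/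
def MemCbeta {n : ℕ} {X : Type*} [NormedAddCommGroup X] (Ω : Set (Euc n)) (β : ℝ)
    (v : Euc n → X) : Prop :=
  BddAbove (wSupSet Ω (fun _ => 1) v) ∧ BddAbove (wHolderSet Ω (fun _ _ => 1) β v)

/-- The (unweighted) `C^{1,β}(Ω)` norm. -/
def normC1beta {n : ℕ} (Ω : Set (Euc n)) (β : ℝ) (u : Euc n → ℝ) : ℝ :=
  wSup Ω (fun _ => 1) u + wSup Ω (fun _ => 1) (fderiv ℝ u) +
    wHolder Ω (fun _ _ => 1) β (fderiv ℝ u)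

/-- Membership in (unweighted) `C^{1,β}(Ω)`. -/
def MemC1beta {n : ℕ} (Ω : Set (Euc n)) (β : ℝ) (u : Euc n → ℝ) : Prop :=
  ContDiffOn ℝ 1 u Ω ∧ BddAbove (wSupSet Ω (fun _ => 1) u) ∧
    BddAbove (wSupSet Ω (fun _ => 1) (fderiv ℝ u)) ∧
    BddAbove (wHolderSet Ω (fun _ _ => 1) β (fderiv ℝ u))

/-- The (unweighted) `C^{2,β}(Ω)` norm. -/
def normC2beta {n : ℕ} (Ω : Set (Euc n)) (β : ℝ) (u : Euc n → ℝ) : ℝ :=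
  wSup Ω (fun _ => 1) u + wSup Ω (fun _ => 1) (fderiv ℝ u) + wSup Ω (fun _ => 1) (D2 u) +
    wHolder Ω (fun _ _ => 1) β (D2 u)

/-- Membership in (unweighted) `C^{2,β}(Ω)`. -/
def MemC2beta {n : ℕ} (Ω : Set (Euc n)) (β : ℝ) (u : Euc n → ℝ) : Prop :=
  ContDiffOn ℝ 2 u Ω ∧ BddAbove (wSupSet Ω (fun _ => 1) u) ∧
    BddAbove (wSupSet Ω (fun _ => 1) (fderiv ℝ u)) ∧
    BddAbove (wSupSet Ω (fun _ => 1) (D2 u)) ∧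
    BddAbove (wHolderSet Ω (fun _ _ => 1) β (D2 u))

/-- The weighted norm `‖u‖_{C⁰₁(Ω)} = sup d_x⁻¹ |u x|`. -/
def normC01 {n : ℕ} (Ω : Set (Euc n)) (u : Euc n → ℝ) : ℝ :=
  wSup Ω (fun x => (dB Ω x)⁻¹) u

/-- The weighted norm `‖u‖_{C²₁(Ω)}`. -/
def normC21 {n : ℕ} (Ω : Set (Euc n)) (u : Euc n → ℝ) : ℝ :=
  normC01 Ω u + wSup Ω (fun _ => 1) (fderiv ℝ u) + wSup Ω (fun x => dB Ω x) (D2 u)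

/-- Membership in `C²₁(Ω)`. -/
def MemC21 {n : ℕ} (Ω : Set (Euc n)) (u : Euc n → ℝ) : Prop :=
  ContDiffOn ℝ 2 u Ω ∧ BddAbove (wSupSet Ω (fun x => (dB Ω x)⁻¹) u) ∧
    BddAbove (wSupSet Ω (fun _ => 1) (fderiv ℝ u)) ∧
    BddAbove (wSupSet Ω (fun x => dB Ω x) (D2 u))

/-- The weighted norm `‖u‖_{C^{2,β}₁(Ω)}`. -/
def normC2beta1 {n : ℕ} (Ω : Set (Euc n)) (β : ℝ) (u : Euc n → ℝ) : ℝ :=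
  normC21 Ω u + wHolder Ω (fun x y => dB2 Ω x y ^ (1 + β)) β (D2 u)

/-- Membership in `C^{2,β}₁(Ω)`. -/
def MemC2beta1 {n : ℕ} (Ω : Set (Euc n)) (β : ℝ) (u : Euc n → ℝ) : Prop :=
  MemC21 Ω u ∧ BddAbove (wHolderSet Ω (fun x y => dB2 Ω x y ^ (1 + β)) β (D2 u))

/-- The weighted norm `‖u‖_{C²_{γ,⋆}(Ω)}`. -/
def normC2gammaStar {n : ℕ} (Ω : Set (Euc n)) (γ : ℝ) (u : Euc n → ℝ) : ℝ :=
  normC01 Ω u + wSup Ω (fun _ => 1) (fderiv ℝ u) + wSup Ω (fun x => dB Ω x ^ γ) (D2 u)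

/-- Membership in `C²_{γ,⋆}(Ω)`. -/
def MemC2gammaStar {n : ℕ} (Ω : Set (Euc n)) (γ : ℝ) (u : Euc n → ℝ) : Prop :=
  ContDiffOn ℝ 2 u Ω ∧ BddAbove (wSupSet Ω (fun x => (dB Ω x)⁻¹) u) ∧
    BddAbove (wSupSet Ω (fun _ => 1) (fderiv ℝ u)) ∧
    BddAbove (wSupSet Ω (fun x => dB Ω x ^ γ) (D2 u))

/-- The weighted norm `‖u‖_{C^{2,β}_{γ,⋆}(Ω)}`. -/
def normC2betagammaStar {n : ℕ} (Ω : Set (Euc n)) (β γ : ℝ) (u : Euc n → ℝ) : ℝ :=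
  normC2gammaStar Ω γ u + wHolder Ω (fun x y => dB2 Ω x y ^ (β + γ)) β (D2 u)

/-- Membership in `C^{2,β}_{γ,⋆}(Ω)`. -/
def MemC2betagammaStar {n : ℕ} (Ω : Set (Euc n)) (β γ : ℝ) (u : Euc n → ℝ) : Prop :=
  MemC2gammaStar Ω γ u ∧ BddAbove (wHolderSet Ω (fun x y => dB2 Ω x y ^ (β + γ)) β (D2 u))

/-- The weighted norm `‖f‖_{C^β_γ(Ω)}`. -/
def normCbetagamma {n : ℕ} (Ω : Set (Euc n)) (β γ : ℝ) (f : Euc n → ℝ) : ℝ :=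
  wSup Ω (fun x => dB Ω x ^ γ) f + wHolder Ω (fun x y => dB2 Ω x y ^ (β + γ)) β f

/-- Membership in `C^β_γ(Ω)`. -/
def MemCbetagamma {n : ℕ} (Ω : Set (Euc n)) (β γ : ℝ) (f : Euc n → ℝ) : Prop :=
  ContinuousOn f Ω ∧ BddAbove (wSupSet Ω (fun x => dB Ω x ^ γ) f) ∧
    BddAbove (wHolderSet Ω (fun x y => dB2 Ω x y ^ (β + γ)) β f)

/-- `Ω` has boundary which is locally (after a rigid motion) the graph of a function of
class `P`, with `Ω` lying locally on one side of it. -/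
def BoundaryOfClass (n : ℕ) (Ω : Set (Euc n)) (P : (Euc (n - 1) → ℝ) → Prop) : Prop :=
  ∀ x ∈ frontier Ω, ∃ hn : 0 < n, ∃ r > (0 : ℝ), ∃ F : Euc n ≃ₗᵢ[ℝ] Euc n,
    ∃ h : Euc (n - 1) → ℝ, P h ∧ ∀ y ∈ ball x r,
      (y ∈ Ω ↔
        h (WithLp.toLp 2 (fun i : Fin (n - 1) => F (y - x) (Fin.castLE (Nat.sub_le n 1) i))) <
          F (y - x) ⟨n - 1, Nat.sub_lt hn Nat.one_pos⟩)

/-- A `C²` function with globally `β`-Hölder continuous second derivative. -/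
def IsC2HolderFun (m : ℕ) (β : ℝ) (h : Euc m → ℝ) : Prop :=
  ContDiff ℝ 2 h ∧ ∃ C : ℝ, ∀ y z, ‖D2 h y - D2 h z‖ ≤ C * ‖y - z‖ ^ β

/-- `Ω` has boundary of class `C^{2,β}`. -/
def BoundaryC2Holder (n : ℕ) (β : ℝ) (Ω : Set (Euc n)) : Prop :=
  BoundaryOfClass n Ω (IsC2HolderFun (n - 1) β)

/-- `Ω` has boundary of class `C²`. -/
def BoundaryC2 (n : ℕ) (Ω : Set (Euc n)) : Prop :=
  BoundaryOfClass n Ω (fun h => ContDiff ℝ 2 h)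

/-- `Ω` has Lipschitz boundary. -/
def BoundaryLipschitz (n : ℕ) (Ω : Set (Euc n)) : Prop :=
  BoundaryOfClass n Ω (fun h => ∃ L : ℝ≥0, LipschitzWith L h)

/-- `Ω` has the exterior ball property. -/
def ExteriorBall (n : ℕ) (Ω : Set (Euc n)) : Prop :=
  ∃ r₀ > (0 : ℝ), ∀ z ∈ frontier Ω, ∃ y ∉ Ω, closedBall y r₀ ∩ closure Ω = {z}

/-- `u` solves the mixed local-nonlocal Dirichlet problem
`p (-Δ)u + q L_k u + g ⋅ Du = f` in `Ω`, `u = 0` on `∂Ω`, `u = 0` in `ℝⁿ ∖ Ω̄`. -/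
def SolvesDir {n : ℕ} (Ω : Set (Euc n)) (k p q : Euc n → ℝ) (g : Euc n → Euc n)
    (f u : Euc n → ℝ) : Prop :=
  ContDiffOn ℝ 2 u Ω ∧ Continuous u ∧ (∀ x ∈ Ω, LkExistsAt k u x) ∧
    (∀ x ∈ Ω, p x * (-lapl u x) + q x * Lk k u x + fderiv ℝ u x (g x) = f x) ∧
    (∀ x ∈ frontier Ω, u x = 0) ∧ ∀ x ∈ (closure Ω)ᶜ, u x = 0

/-- `u` solves the Poisson problem `-Δu = f` in `Ω`, `u = 0` on `∂Ω`,
in the class `C²(Ω) ∩ C⁰(Ω̄)`. -/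
def PoissonSol {n : ℕ} (Ω : Set (Euc n)) (f u : Euc n → ℝ) : Prop :=
  ContDiffOn ℝ 2 u Ω ∧ ContinuousOn u (closure Ω) ∧ (∀ x ∈ Ω, -lapl u x = f x) ∧
    ∀ x ∈ frontier Ω, u x = 0

/-- The last ("vertical") coordinate of a point of `ℝ^{d+1}`. -/
def xlast {d : ℕ} (x : Euc (d + 1)) : ℝ := x (Fin.last d)

/-- The norm of the horizontal part `x'` of a point of `ℝ^{d+1}`. -/
def xinitNorm {d : ℕ} (x : Euc (d + 1)) : ℝ :=
  ‖x - xlast x • EuclideanSpace.single (Fin.last d) (1 : ℝ)‖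

/-- The cylinder `𝒞_r = B'_r × (-r, r)`. -/
def cyl (d : ℕ) (r : ℝ) : Set (Euc (d + 1)) := {x | xinitNorm x < r ∧ |xlast x| < r}

/-- The upper half-cylinder `𝒞_r⁺ = B'_r × (0, r)`. -/
def cylP (d : ℕ) (r : ℝ) : Set (Euc (d + 1)) :=
  {x | xinitNorm x < r ∧ 0 < xlast x ∧ xlast x < r}

/-- The disk `𝒟_r = B'_r × {0}`. -/
def disk (d : ℕ) (r : ℝ) : Set (Euc (d + 1)) := {x | xinitNorm x < r ∧ xlast x = 0}

/-- Reflection across the hyperplane `{x_n = 0}`. -/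
def reflPt {d : ℕ} (x : Euc (d + 1)) : Euc (d + 1) :=
  x - (2 * xlast x) • EuclideanSpace.single (Fin.last d) (1 : ℝ)

/-- The odd reflection `f°` of `f` across `{x_n = 0}`. -/
def oddRefl {d : ℕ} (f : Euc (d + 1) → ℝ) (x : Euc (d + 1)) : ℝ :=
  if 0 < xlast x then f x else if xlast x < 0 then -f (reflPt x) else 0

/-- The fundamental solution of `-Δ` in `ℝⁿ`. -/
def fundSol (n : ℕ) (z : Euc n) : ℝ :=
  if n = 2 then -(2 * Real.pi)⁻¹ * Real.log ‖z‖
  else ((n : ℝ) * ((n : ℝ) - 2) * (volume (ball (0 : Euc n) 1)).toReal)⁻¹ *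
    ‖z‖ ^ (2 - (n : ℝ))

/-- The norm `‖f‖_{C̃^β_γ(𝒞_r⁺)}`. -/
def tnormBG (d : ℕ) {X : Type*} [NormedAddCommGroup X] (r β γ : ℝ) (v : Euc (d + 1) → X) : ℝ :=
  wSup (cylP d r) (fun x => xlast x ^ γ) v +
    wHolder (cylP d r) (fun x y => min (xlast x) (xlast y) ^ (β + γ)) β v

/-- Membership in `C̃^β_γ(𝒞_r⁺)`. -/
def tMemBG (d : ℕ) {X : Type*} [NormedAddCommGroup X] (r β γ : ℝ) (v : Euc (d + 1) → X) : Prop :=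
  BddAbove (wSupSet (cylP d r) (fun x => xlast x ^ γ) v) ∧
    BddAbove (wHolderSet (cylP d r) (fun x y => min (xlast x) (xlast y) ^ (β + γ)) β v)

/-- The norm `‖w‖_{C̃^{2,β}_{γ,⋆}(𝒞_r⁺)}`. -/
def tnormC2 (d : ℕ) (r β γ : ℝ) (w : Euc (d + 1) → ℝ) : ℝ :=
  wSup (cylP d r) (fun x => (xlast x)⁻¹) w + wSup (cylP d r) (fun _ => 1) (fderiv ℝ w) +
    tnormBG d r β γ (D2 w)

/-- Membership in `C̃^{2,β}_{γ,⋆}(𝒞_r⁺)`. -/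
def tMemC2 (d : ℕ) (r β γ : ℝ) (w : Euc (d + 1) → ℝ) : Prop :=
  ContDiffOn ℝ 2 w (cylP d r) ∧ BddAbove (wSupSet (cylP d r) (fun x => (xlast x)⁻¹) w) ∧
    BddAbove (wSupSet (cylP d r) (fun _ => 1) (fderiv ℝ w)) ∧ tMemBG d r β γ (D2 w)

end

namespace KernelBarrier


lemma coord_abs_le {n : ℕ} (y : Euc n) (i : Fin n) : |y i| ≤ ‖y‖ := by
  rw [EuclideanSpace.norm_eq, show |y i| = Real.sqrt (y i ^ 2) by rw [Real.sqrt_sq_eq_abs]]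
  apply Real.sqrt_le_sqrt
  calc y i ^ 2 = ‖y i‖ ^ 2 := by rw [Real.norm_eq_abs, sq_abs]
  _ ≤ ∑ j, ‖y j‖ ^ 2 :=
    Finset.single_le_sum (f := fun j => ‖y j‖ ^ 2) (fun j _ => by positivity) (Finset.mem_univ i)

lemma nontrivial_euc {n : ℕ} (hn : 0 < n) : Nontrivial (Euc n) := by
  refine nontrivial_of_ne (EuclideanSpace.single ⟨0, hn⟩ (1 : ℝ)) 0 fun h => ?_
  have := congrArg (fun v : Euc n => v ⟨0, hn⟩) h
  simp [EuclideanSpace.single_apply] at this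

lemma exp_sym_nonneg (t : ℝ) : 0 ≤ Real.exp t + Real.exp (-t) - 2 := by
  have hAB : Real.exp t * Real.exp (-t) = 1 := by rw [← Real.exp_add]; simp
  nlinarith [mul_nonneg (sq_nonneg (Real.exp t - 1)) (Real.exp_pos (-t)).le,
    Real.exp_pos t, Real.exp_pos (-t)]

lemma exp_sym_le_aux {u : ℝ} (hu : 0 ≤ u) :
    Real.exp u + Real.exp (-u) - 2 ≤ u ^ 2 * Real.exp u := by
  have hAB : Real.exp u * Real.exp (-u) = 1 := by rw [← Real.exp_add]; simp
  have h1 : -u + 1 ≤ Real.exp (-u) := Real.add_one_le_exp (-u)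
  have hA1 : 1 ≤ Real.exp u := Real.one_le_exp hu
  have hB0 : 0 < Real.exp (-u) := Real.exp_pos _
  nlinarith [sq_nonneg (Real.exp u - 1), sq_nonneg (u * Real.exp u - (Real.exp u - 1)),
    mul_nonneg hu (Real.exp_pos u).le]

lemma exp_sym_le (t : ℝ) : Real.exp t + Real.exp (-t) - 2 ≤ t ^ 2 * Real.exp |t| := by
  rcases abs_cases t with ⟨h1, _⟩ | ⟨h1, h2⟩
  · rw [h1]; exact exp_sym_le_aux (h1 ▸ abs_nonneg t)
  · rw [h1]
    have h := exp_sym_le_aux (u := -t) (by linarith)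
    have : Real.exp t + Real.exp (-t) - 2 = Real.exp (-t) + Real.exp (-(-t)) - 2 := by
      rw [neg_neg]; ring
    rw [this]
    calc Real.exp (-t) + Real.exp (-(-t)) - 2 ≤ (-t) ^ 2 * Real.exp (-t) := h
    _ = t ^ 2 * Real.exp (-t) := by ring

lemma int_ball {n : ℕ} (hn : 0 < n) {a R : ℝ} (ha : -(n : ℝ) < a) (hR : 0 < R) :
    IntegrableOn (fun z : Euc n => ‖z‖ ^ a) (ball (0 : Euc n) R) := by
  haveI : Nonempty (Fin n) := ⟨⟨0, hn⟩⟩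
  haveI : Nontrivial (Euc n) := nontrivial_euc hn
  have hmeas : Measurable fun z : Euc n => ‖z‖ ^ a := by fun_prop
  rcases le_or_gt 0 a with ha0 | ha0
  · refine Measure.integrableOn_of_bounded (M := R ^ a) measure_ball_lt_top.ne
      hmeas.aestronglyMeasurable ?_
    filter_upwards [ae_restrict_mem measurableSet_ball] with z hz
    rw [Real.norm_eq_abs, abs_of_nonneg (Real.rpow_nonneg (norm_nonneg z) a)]
    exact Real.rpow_le_rpow (norm_nonneg z) (mem_ball_zero_iff.1 hz).le ha0
  · refine ⟨hmeas.aestronglyMeasurable, ?_⟩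
    rw [hasFiniteIntegral_iff_ofReal
      (Eventually.of_forall fun z => Real.rpow_nonneg (norm_nonneg z) a)]
    set q : ℝ := (1 / 2 : ℝ) with hq
    have hq0 : 0 < q := by norm_num [hq]
    have hq1 : q < 1 := by norm_num [hq]
    set A : ℕ → Set (Euc n) := fun k => {z | R * q ^ (k + 1) ≤ ‖z‖ ∧ ‖z‖ ≤ R * q ^ k} with hA
    have hcover : ball (0 : Euc n) R ⊆ {(0 : Euc n)} ∪ ⋃ k, A k := by
      intro z hz
      rcases eq_or_ne z 0 with rfl | hz0
      · exact Or.inl rfl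
      right
      have hz' : ‖z‖ < R := by simpa using hz
      have hzpos : 0 < ‖z‖ := norm_pos_iff.2 hz0
      have hex : ∃ k : ℕ, q ^ (k + 1) < ‖z‖ / R := by
        obtain ⟨m, hm⟩ := exists_pow_lt_of_lt_one (div_pos hzpos hR) hq1
        exact ⟨m, lt_of_le_of_lt (pow_le_pow_of_le_one hq0.le hq1.le (Nat.le_succ m)) hm⟩
      have hml : q ^ (Nat.find hex + 1) < ‖z‖ / R := Nat.find_spec hex
      refine mem_iUnion.2 ⟨Nat.find hex, ?_, ?_⟩
      · have := (lt_div_iff₀ hR).1 hml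
        nlinarith
      · rcases Nat.eq_zero_or_pos (Nat.find hex) with h0 | hm0
        · rw [h0, pow_zero, mul_one]; exact hz'.le
        · obtain ⟨l, hl⟩ : ∃ l, Nat.find hex = l + 1 := ⟨Nat.find hex - 1, by omega⟩
          have hmin := Nat.find_min hex (m := l) (by omega)
          push_neg at hmin
          rw [hl]
          have := (div_le_iff₀ hR).1 hmin
          linarith
    set V : ℝ≥0∞ := volume (ball (0 : Euc n) 1) with hV
    have hVfin : V ≠ ⊤ := measure_ball_lt_top.ne
    have hstep : ∀ k : ℕ, ∫⁻ z in A k, ENNReal.ofReal (‖z‖ ^ a) ≤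
        ENNReal.ofReal ((R * q ^ (k + 1)) ^ a) * (ENNReal.ofReal ((R * q ^ k) ^ n) * V) := by
      intro k
      have h1 : ∫⁻ z in A k, ENNReal.ofReal (‖z‖ ^ a) ≤
          ∫⁻ _ in A k, ENNReal.ofReal ((R * q ^ (k + 1)) ^ a) := by
        refine setLIntegral_mono measurable_const fun z hz => ?_
        exact ENNReal.ofReal_le_ofReal
          (Real.rpow_le_rpow_of_nonpos (by positivity) hz.1 ha0.le)
      have h2 : volume (A k) ≤ ENNReal.ofReal ((R * q ^ k) ^ n) * V := by
        have : A k ⊆ closedBall (0 : Euc n) (R * q ^ k) := fun z hz => by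
          simpa [dist_eq_norm] using hz.2
        calc volume (A k) ≤ volume (closedBall (0 : Euc n) (R * q ^ k)) := measure_mono this
        _ = ENNReal.ofReal ((R * q ^ k) ^ Module.finrank ℝ (Euc n)) * V :=
            Measure.addHaar_closedBall _ _ (by positivity)
        _ = ENNReal.ofReal ((R * q ^ k) ^ n) * V := by rw [finrank_euclideanSpace_fin]
      calc ∫⁻ z in A k, ENNReal.ofReal (‖z‖ ^ a)
          ≤ ∫⁻ _ in A k, ENNReal.ofReal ((R * q ^ (k + 1)) ^ a) := h1
      _ = ENNReal.ofReal ((R * q ^ (k + 1)) ^ a) * volume (A k) := setLIntegral_const _ _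
      _ ≤ _ := by gcongr
    set c0 : ℝ := R ^ a * q ^ a * R ^ (n : ℕ) with hc0
    set t0 : ℝ := q ^ a * q ^ (n : ℕ) with ht0
    have hterm : ∀ k : ℕ, ENNReal.ofReal ((R * q ^ (k + 1)) ^ a) *
        (ENNReal.ofReal ((R * q ^ k) ^ n) * V) =
        (ENNReal.ofReal c0 * V) * (ENNReal.ofReal t0) ^ k := by
      intro k
      have e1 : (R * q ^ (k + 1)) ^ a = R ^ a * (q ^ a) ^ (k + 1) := by
        rw [Real.mul_rpow hR.le (by positivity), ← Real.rpow_natCast q (k+1),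
          ← Real.rpow_natCast (q ^ a) (k+1), ← Real.rpow_mul hq0.le,
          ← Real.rpow_mul hq0.le, mul_comm a ((k+1 : ℕ) : ℝ)]
      have e2 : (R * q ^ k) ^ (n : ℕ) = R ^ (n : ℕ) * (q ^ (n : ℕ)) ^ k := by
        rw [mul_pow, ← pow_mul, ← pow_mul, Nat.mul_comm]
      have e3 : (R * q ^ (k + 1)) ^ a * (R * q ^ k) ^ (n : ℕ) = c0 * t0 ^ k := by
        rw [e1, e2, hc0, ht0, pow_succ, mul_pow]; ring
      rw [← mul_assoc, ← ENNReal.ofReal_mul (by positivity), e3,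
        ENNReal.ofReal_mul (by positivity), ENNReal.ofReal_pow (by positivity)]
      ring
    have hqan : t0 < 1 := by
      rw [ht0]
      rw [← Real.rpow_natCast q n, ← Real.rpow_add hq0]
      exact Real.rpow_lt_one hq0.le hq1 (by linarith)
    calc ∫⁻ z in ball (0 : Euc n) R, ENNReal.ofReal (‖z‖ ^ a)
        ≤ ∫⁻ z in {(0 : Euc n)} ∪ ⋃ k, A k, ENNReal.ofReal (‖z‖ ^ a) :=
          lintegral_mono_set hcover
    _ ≤ (∫⁻ z in {(0 : Euc n)}, ENNReal.ofReal (‖z‖ ^ a)) +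
          ∫⁻ z in ⋃ k, A k, ENNReal.ofReal (‖z‖ ^ a) := lintegral_union_le _ _ _
    _ ≤ 0 + ∑' k, ∫⁻ z in A k, ENNReal.ofReal (‖z‖ ^ a) := by
        gcongr
        · rw [Measure.restrict_singleton, measure_singleton]; simp
        · exact lintegral_iUnion_le _ _
    _ = ∑' k, ∫⁻ z in A k, ENNReal.ofReal (‖z‖ ^ a) := by rw [zero_add]
    _ ≤ ∑' k, (ENNReal.ofReal c0 * V) * (ENNReal.ofReal t0) ^ k :=
        ENNReal.tsum_le_tsum fun k => (hstep k).trans_eq (hterm k)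
    _ = (ENNReal.ofReal c0 * V) * ∑' k, (ENNReal.ofReal t0) ^ k := ENNReal.tsum_mul_left
    _ < ⊤ := by
        rw [ENNReal.tsum_geometric]
        refine ENNReal.mul_lt_top (ENNReal.mul_lt_top ENNReal.ofReal_lt_top hVfin.lt_top) ?_
        rw [ENNReal.inv_lt_top]
        exact tsub_pos_of_lt (ENNReal.ofReal_lt_one.2 hqan)



lemma outer_int {n : ℕ} (hn : 0 < n) {p R : ℝ} (hp : (n : ℝ) < p) (hR : 0 < R) :
    IntegrableOn (fun z : Euc n => ‖z‖ ^ (-p)) {z : Euc n | R ≤ ‖z‖} := by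
  haveI : Nonempty (Fin n) := ⟨⟨0, hn⟩⟩
  have hp0 : 0 < p := lt_of_le_of_lt (Nat.cast_nonneg n) hp
  have hmeas : Measurable fun z : Euc n => ‖z‖ ^ (-p) := by fun_prop
  have hms : ∀ r : ℝ, MeasurableSet {z : Euc n | r ≤ ‖z‖} :=
    fun r => measurable_norm measurableSet_Ici
  have base : IntegrableOn (fun z : Euc n => ‖z‖ ^ (-p)) {z : Euc n | 1 ≤ ‖z‖} := by
    have hJ : Integrable (fun z : Euc n => (2 : ℝ) ^ p * (1 + ‖z‖) ^ (-p)) := by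
      refine Integrable.const_mul ?_ _
      have h := integrable_one_add_norm (E := Euc n) (μ := volume) (r := p)
        (by rwa [finrank_euclideanSpace_fin])
      exact h
    refine hJ.integrableOn.mono' hmeas.aestronglyMeasurable ?_
    filter_upwards [ae_restrict_mem (hms 1)] with z hz
    have hz1 : (1 : ℝ) ≤ ‖z‖ := hz
    have hzpos : (0 : ℝ) < ‖z‖ := lt_of_lt_of_le one_pos hz1
    rw [Real.norm_eq_abs, abs_of_nonneg (Real.rpow_nonneg (norm_nonneg z) _)]
    have key : (1 + ‖z‖) ^ p ≤ 2 ^ p * ‖z‖ ^ p := by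
      calc (1 + ‖z‖) ^ p ≤ (2 * ‖z‖) ^ p :=
            Real.rpow_le_rpow (by positivity) (by linarith) hp0.le
      _ = 2 ^ p * ‖z‖ ^ p := Real.mul_rpow (by norm_num) (norm_nonneg z)
    have ha : (0 : ℝ) < ‖z‖ ^ p := Real.rpow_pos_of_pos hzpos p
    have hb : (0 : ℝ) < (1 + ‖z‖) ^ p := Real.rpow_pos_of_pos (by positivity) p
    rw [Real.rpow_neg (norm_nonneg z), Real.rpow_neg (by positivity : (0:ℝ) ≤ 1 + ‖z‖)]
    rw [show (2:ℝ) ^ p * ((1 + ‖z‖) ^ p)⁻¹ = 2 ^ p / (1 + ‖z‖) ^ p by ring,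
      le_div_iff₀ hb, inv_mul_le_iff₀ ha]
    calc (1 + ‖z‖) ^ p ≤ 2 ^ p * ‖z‖ ^ p := key
    _ = ‖z‖ ^ p * 2 ^ p := by ring
  rcases le_or_gt 1 R with h1R | h1R
  · exact base.mono_set fun z hz => le_trans h1R hz
  · have hsplit : {z : Euc n | R ≤ ‖z‖} =
        {z : Euc n | R ≤ ‖z‖ ∧ ‖z‖ < 1} ∪ {z : Euc n | 1 ≤ ‖z‖} := by
      ext z; constructor
      · intro hz; rcases lt_or_ge ‖z‖ 1 with h | h
        · exact Or.inl ⟨hz, h⟩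
        · exact Or.inr h
      · rintro (⟨hz, _⟩ | hz); · exact hz
        · exact le_trans h1R.le hz
    rw [hsplit]
    refine IntegrableOn.union ?_ base
    have hfin : volume {z : Euc n | R ≤ ‖z‖ ∧ ‖z‖ < 1} ≠ ⊤ := by
      have hsub : {z : Euc n | R ≤ ‖z‖ ∧ ‖z‖ < 1} ⊆ ball (0 : Euc n) 1 :=
        fun z hz => mem_ball_zero_iff.2 hz.2
      exact ((measure_mono hsub).trans_lt measure_ball_lt_top).ne
    refine Measure.integrableOn_of_bounded (M := R ^ (-p)) hfin hmeas.aestronglyMeasurable ?_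
    filter_upwards [ae_restrict_mem
      ((hms R).inter (measurable_norm measurableSet_Iio))] with z hz
    rw [Real.norm_eq_abs, abs_of_nonneg (Real.rpow_nonneg (norm_nonneg z) _)]
    exact Real.rpow_le_rpow_of_nonpos hR hz.1 (by linarith)

lemma outer_val {n : ℕ} (hn : 0 < n) {p R : ℝ} (hp : (n : ℝ) < p) (hR : 0 < R) :
    ∫ z in {z : Euc n | R ≤ ‖z‖}, ‖z‖ ^ (-p) =
      R ^ ((n : ℝ) - p) * ∫ z in {z : Euc n | 1 ≤ ‖z‖}, ‖z‖ ^ (-p) := by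
  haveI : Nonempty (Fin n) := ⟨⟨0, hn⟩⟩
  have hms : ∀ r : ℝ, MeasurableSet {z : Euc n | r ≤ ‖z‖} :=
    fun r => measurable_norm measurableSet_Ici
  set g : Euc n → ℝ := ({z : Euc n | 1 ≤ ‖z‖}).indicator (fun z => ‖z‖ ^ (-p)) with hg
  have h1 : ∫ z : Euc n, g (R⁻¹ • z) = R ^ Module.finrank ℝ (Euc n) • ∫ z : Euc n, g z :=
    Measure.integral_comp_inv_smul_of_nonneg volume g hR.le
  have hnorm : ∀ z : Euc n, ‖R⁻¹ • z‖ = R⁻¹ * ‖z‖ := fun z => by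
    rw [norm_smul, Real.norm_eq_abs, abs_of_pos (inv_pos.2 hR)]
  have hmem : ∀ z : Euc n, (1 : ℝ) ≤ ‖R⁻¹ • z‖ ↔ R ≤ ‖z‖ := fun z => by
    rw [hnorm z, inv_mul_eq_div, one_le_div hR]
  have h2 : ∀ z : Euc n, g (R⁻¹ • z) =
      R ^ p • ({z : Euc n | R ≤ ‖z‖}).indicator (fun z => ‖z‖ ^ (-p)) z := by
    intro z
    rw [hg]
    by_cases hz : R ≤ ‖z‖
    · rw [Set.indicator_of_mem (show R⁻¹ • z ∈ {z : Euc n | 1 ≤ ‖z‖} from (hmem z).2 hz),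
        Set.indicator_of_mem (show z ∈ {z : Euc n | R ≤ ‖z‖} from hz), hnorm z, smul_eq_mul,
        Real.mul_rpow (inv_nonneg.2 hR.le) (norm_nonneg z), Real.inv_rpow hR.le,
        Real.rpow_neg hR.le, inv_inv]
    · rw [Set.indicator_of_notMem (show R⁻¹ • z ∉ {z : Euc n | 1 ≤ ‖z‖} from
        fun h => hz ((hmem z).1 h)),
        Set.indicator_of_notMem (show z ∉ {z : Euc n | R ≤ ‖z‖} from hz), smul_zero]
  have h3 : ∫ z : Euc n, g (R⁻¹ • z) =
      R ^ p * ∫ z in {z : Euc n | R ≤ ‖z‖}, ‖z‖ ^ (-p) := by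
    rw [show (fun z : Euc n => g (R⁻¹ • z)) = fun z : Euc n =>
      R ^ p • ({z : Euc n | R ≤ ‖z‖}).indicator (fun z => ‖z‖ ^ (-p)) z from funext h2]
    rw [integral_smul, integral_indicator (hms R), smul_eq_mul]
  have h4 : (R : ℝ) ^ Module.finrank ℝ (Euc n) • ∫ z : Euc n, g z =
      R ^ (n : ℕ) * ∫ z in {z : Euc n | 1 ≤ ‖z‖}, ‖z‖ ^ (-p) := by
    rw [hg, integral_indicator (hms 1), finrank_euclideanSpace_fin, smul_eq_mul]
  have heq : R ^ p * (∫ z in {z : Euc n | R ≤ ‖z‖}, ‖z‖ ^ (-p)) =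
      R ^ (n : ℕ) * ∫ z in {z : Euc n | 1 ≤ ‖z‖}, ‖z‖ ^ (-p) := by
    rw [← h3, ← h4, h1]
  have hRp : (0 : ℝ) < R ^ p := Real.rpow_pos_of_pos hR p
  have hpow : R ^ ((n : ℝ) - p) = R ^ (n : ℕ) / R ^ p := by
    rw [Real.rpow_sub hR, Real.rpow_natCast]
  rw [hpow]
  field_simp
  linarith [heq]


end KernelBarrier

set_option maxHeartbeats 1000000 in
/-- The auxiliary barrier `v = e^{λ x₁} χ_{B_{2R}}` satisfies
`L_k v ≤ -C⁻¹ e^{λR/2} (λ R^{1+2s})⁻¹ v` in `B_R`, provided `λR` is large enough. -/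
theorem kernel_barrier_lemma
    (n : ℕ) (hn : 0 < n) (s κ₁ κ₂ : ℝ)
    (hs : s ∈ Set.Ioo (0 : ℝ) 1) (hκ₁ : 0 < κ₁) (hκ : κ₁ ≤ κ₂) :
    ∃ C : ℝ, 1 ≤ C ∧ ∀ k : Euc n → ℝ, IsAdmissibleKernel n s κ₁ κ₂ k →
      ∀ lam R : ℝ, 0 < lam → 0 < R → C ≤ lam * R →
      ∀ v : Euc n → ℝ,
        (∀ y, v y = if ‖y‖ < 2 * R then Real.exp (lam * y ⟨0, hn⟩) else 0) →
      ∀ x ∈ ball (0 : Euc n) R,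
        LkExistsAt k v x ∧
          Lk k v x ≤ -(1 / C) * (Real.exp (lam * R / 2) / (lam * R ^ (1 + 2 * s))) * v x := by
  classical
  obtain ⟨hs0, hs1⟩ := hs
  haveI : Nonempty (Fin n) := ⟨⟨0, hn⟩⟩
  haveI : Nontrivial (Euc n) := KernelBarrier.nontrivial_euc hn
  have hκ₂ : 0 < κ₂ := lt_of_lt_of_le hκ₁ hκ
  set i0 : Fin n := ⟨0, hn⟩ with hi0
  set p : ℝ := (n : ℝ) + 2 * s with hp_def
  have hnp : (n : ℝ) < p := by rw [hp_def]; linarith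
  have hp0 : 0 < p := lt_of_le_of_lt (Nat.cast_nonneg n) hnp
  have h2p : -(n : ℝ) < 2 - p := by rw [hp_def]; linarith
  set vn : ℝ := (volume (ball (0 : Euc n) 1)).toReal with hvn_def
  have hvn_pos : 0 < vn :=
    ENNReal.toReal_pos (measure_ball_pos _ _ one_pos).ne' measure_ball_lt_top.ne
  set cOut : ℝ := ∫ z in {z : Euc n | 1 ≤ ‖z‖}, ‖z‖ ^ (-p) with hcOut_def
  have hcOut0 : 0 ≤ cOut :=
    setIntegral_nonneg (measurable_norm measurableSet_Ici)
      fun z _ => Real.rpow_nonneg (norm_nonneg z) _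
  set c₁ : ℝ := κ₁ * vn / (4 * 8 ^ n) with hc1_def
  have hc1 : 0 < c₁ := by rw [hc1_def]; positivity
  set M : ℝ := 4 + 2 * (κ₂ * cOut) / c₁ with hM_def
  have hM4 : (4 : ℝ) ≤ M := by
    have h : 0 ≤ 2 * (κ₂ * cOut) / c₁ := by
      apply div_nonneg _ hc1.le
      exact mul_nonneg (by norm_num) (mul_nonneg hκ₂.le hcOut0)
    rw [hM_def]; linarith
  have hMpos : 0 < M := by linarith
  set C : ℝ := max (max 1 (2 / c₁)) (2 * Real.log M) with hC_def
  have hC1 : (1 : ℝ) ≤ C := le_trans (le_max_left _ _) (le_max_left _ _)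
  have hC2 : 2 / c₁ ≤ C := le_trans (le_max_right _ _) (le_max_left _ _)
  have hClog : 2 * Real.log M ≤ C := le_max_right _ _
  have hCpos : 0 < C := lt_of_lt_of_le one_pos hC1
  refine ⟨C, hC1, ?_⟩
  rintro k ⟨hkm, hksym, hkae⟩ lam R hlam hR hCl v hv x hx
  -- basic a.e. facts about k
  have hk_ub : ∀ᵐ z : Euc n, k z ≤ κ₂ / ‖z‖ ^ p := hkae.mono fun z h => h.2
  have hk_lb : ∀ᵐ z : Euc n, κ₁ / ‖z‖ ^ p ≤ k z := hkae.mono fun z h => h.1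
  have hk0 : ∀ᵐ z : Euc n, 0 ≤ k z := hk_lb.mono fun z h =>
    le_trans (div_nonneg hκ₁.le (Real.rpow_nonneg (norm_nonneg z) p)) h
  have hzne : ∀ᵐ z : Euc n, z ≠ 0 := by
    rw [ae_iff]
    have h1 : {z : Euc n | ¬z ≠ 0} = {0} := by ext z; simp
    rw [h1]; exact measure_singleton 0
  have hx' : ‖x‖ < R := mem_ball_zero_iff.1 hx
  -- facts about v
  have hproj : Measurable fun y : Euc n => y i0 := by
    have h := (EuclideanSpace.proj (𝕜 := ℝ) i0).continuous.measurable
    simpa using h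
  have hvx : v x = Real.exp (lam * x i0) := by
    rw [hv x, if_pos (lt_of_lt_of_le hx' (by linarith))]
  have hvx_pos : 0 < v x := hvx ▸ Real.exp_pos _
  have hv_nonneg : ∀ y, 0 ≤ v y := fun y => by
    rw [hv y]; split
    · exact (Real.exp_pos _).le
    · exact le_refl 0
  have hv_le : ∀ y, v y ≤ Real.exp (lam * (2 * R)) := fun y => by
    rw [hv y]; split
    · next h =>
      refine Real.exp_le_exp.2 (mul_le_mul_of_nonneg_left ?_ hlam.le)
      exact le_trans (le_abs_self _) (le_trans (KernelBarrier.coord_abs_le y i0) h.le)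
    · exact (Real.exp_pos _).le
  have hvmeas : Measurable v := by
    rw [show v = fun y => if ‖y‖ < 2 * R then Real.exp (lam * y i0) else 0 from funext hv]
    exact Measurable.ite (measurableSet_lt measurable_norm measurable_const)
      (Real.measurable_exp.comp (hproj.const_mul lam)) measurable_const
  -- the integrand
  set f : Euc n → ℝ := fun z => (v x - v (x + z)) * k z with hf_def
  have hfm : Measurable f :=
    (measurable_const.sub (hvmeas.comp (measurable_id.const_add x))).mul hkm
  set B : ℝ := 2 * Real.exp (lam * (2 * R)) with hB_def
  have hB0 : 0 < B := by rw [hB_def]; positivity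
  have hfdiff : ∀ z, |v x - v (x + z)| ≤ B := by
    intro z
    rw [hB_def, abs_le]
    constructor <;> linarith [hv_le x, hv_le (x + z), hv_nonneg x, hv_nonneg (x + z),
      Real.exp_pos (lam * (2 * R))]
  have hfabs : ∀ᵐ z : Euc n, |f z| ≤ B * (κ₂ * ‖z‖ ^ (-p)) := by
    filter_upwards [hk_ub, hk0] with z h2 h0
    rw [hf_def]
    calc |(v x - v (x + z)) * k z| = |v x - v (x + z)| * |k z| := abs_mul _ _
    _ ≤ B * (κ₂ * ‖z‖ ^ (-p)) := by
        refine mul_le_mul (hfdiff z) ?_ (abs_nonneg _) hB0.le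
        rw [abs_of_nonneg h0]
        calc k z ≤ κ₂ / ‖z‖ ^ p := h2
        _ = κ₂ * ‖z‖ ^ (-p) := by
            rw [Real.rpow_neg (norm_nonneg z), div_eq_mul_inv]
  -- the outer region
  set Out : Set (Euc n) := {z : Euc n | R ≤ ‖z‖} with hOut_def
  have hOutMeas : MeasurableSet Out := measurable_norm measurableSet_Ici
  have hfOut : IntegrableOn f Out := by
    have hOutDom : IntegrableOn (fun z : Euc n => B * (κ₂ * ‖z‖ ^ (-p))) Out :=
      (((KernelBarrier.outer_int hn hnp hR).const_mul κ₂).const_mul B)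
    refine hOutDom.mono' hfm.aestronglyMeasurable.restrict ?_
    filter_upwards [ae_restrict_of_ae hfabs] with z hz
    simpa [Real.norm_eq_abs] using hz
  set Jout : ℝ := ∫ z in Out, f z with hJ_def
  set ρ : ℝ := R ^ ((n : ℝ) - p) with hρ_def
  have hρ_pos : 0 < ρ := Real.rpow_pos_of_pos hR _
  have hJout_le : Jout ≤ v x * (κ₂ * cOut * ρ) := by
    have hgInt : IntegrableOn (fun z : Euc n => v x * κ₂ * ‖z‖ ^ (-p)) Out :=
      ((KernelBarrier.outer_int hn hnp hR).const_mul (v x * κ₂))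
    have hmono : ∀ᵐ z ∂(volume.restrict Out), f z ≤ v x * κ₂ * ‖z‖ ^ (-p) := by
      filter_upwards [ae_restrict_of_ae hk_ub, ae_restrict_of_ae hk0] with z h2 h0
      rw [hf_def]
      calc (v x - v (x + z)) * k z ≤ v x * k z :=
            mul_le_mul_of_nonneg_right (by linarith [hv_nonneg (x + z)]) h0
      _ ≤ v x * (κ₂ * ‖z‖ ^ (-p)) := by
          refine mul_le_mul_of_nonneg_left ?_ hvx_pos.le
          calc k z ≤ κ₂ / ‖z‖ ^ p := h2
          _ = κ₂ * ‖z‖ ^ (-p) := by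
              rw [Real.rpow_neg (norm_nonneg z), div_eq_mul_inv]
      _ = v x * κ₂ * ‖z‖ ^ (-p) := by ring
    calc Jout ≤ ∫ z in Out, v x * κ₂ * ‖z‖ ^ (-p) :=
          setIntegral_mono_ae_restrict hfOut hgInt hmono
    _ = v x * κ₂ * ∫ z in Out, ‖z‖ ^ (-p) := integral_const_mul _ _
    _ = v x * κ₂ * (ρ * cOut) := by
        rw [hOut_def, KernelBarrier.outer_val hn hnp hR, hρ_def, hcOut_def]
    _ = v x * (κ₂ * cOut * ρ) := by ring
  -- annuli
  set Ann : ℝ → Set (Euc n) := fun ε => {z : Euc n | ε ≤ ‖z‖ ∧ ‖z‖ < R} with hAnn_def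
  have hAnnMeas : ∀ ε, MeasurableSet (Ann ε) := fun ε =>
    (measurable_norm measurableSet_Ici).inter (measurable_norm measurableSet_Iio)
  have hAnnBall : ∀ ε, Ann ε ⊆ ball (0 : Euc n) R := fun ε z hz => mem_ball_zero_iff.2 hz.2
  have hAnnFin : ∀ ε, volume (Ann ε) ≠ ⊤ := fun ε =>
    ((measure_mono (hAnnBall ε)).trans_lt measure_ball_lt_top).ne
  have hAnnInt : ∀ (g : Euc n → ℝ) (Cg : ℝ), Measurable g →
      (∀ z : Euc n, ‖z‖ < R → |g z| ≤ Cg) →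
      ∀ ε : ℝ, 0 < ε → IntegrableOn (fun z => g z * k z) (Ann ε) := by
    intro g Cg hgm hgb ε hε
    refine Measure.integrableOn_of_bounded (M := Cg * (κ₂ * ε ^ (-p))) (hAnnFin ε)
      ((hgm.mul hkm).aestronglyMeasurable) ?_
    filter_upwards [ae_restrict_of_ae hk_ub, ae_restrict_of_ae hk0,
      ae_restrict_mem (hAnnMeas ε)] with z h2 h0 hzmem
    have hCg0 : 0 ≤ Cg := le_trans (abs_nonneg _) (hgb z hzmem.2)
    rw [Real.norm_eq_abs, abs_mul, abs_of_nonneg h0]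
    refine mul_le_mul (hgb z hzmem.2) ?_ h0 hCg0
    calc k z ≤ κ₂ / ‖z‖ ^ p := h2
    _ ≤ κ₂ * ε ^ (-p) := by
        rw [Real.rpow_neg hε.le, div_eq_mul_inv]
        refine mul_le_mul_of_nonneg_left ?_ hκ₂.le
        exact inv_anti₀ (Real.rpow_pos_of_pos hε p)
          (Real.rpow_le_rpow hε.le hzmem.1 hp0.le)
  have hfAnn : ∀ ε : ℝ, 0 < ε → IntegrableOn f (Ann ε) := fun ε hε =>
    hAnnInt (fun z => v x - v (x + z)) B
      (measurable_const.sub (hvmeas.comp (measurable_id.const_add x)))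
      (fun z _ => hfdiff z) ε hε
  -- the symmetrized integrand
  set w : Euc n → ℝ :=
    fun z => (Real.exp (lam * z i0) + Real.exp (-(lam * z i0)) - 2) * k z with hw_def
  have hgwm : Measurable fun z : Euc n =>
      Real.exp (lam * z i0) + Real.exp (-(lam * z i0)) - 2 := by
    have h1 := Real.measurable_exp.comp (hproj.const_mul lam)
    have h2 := Real.measurable_exp.comp (hproj.const_mul lam).neg
    exact (h1.add h2).sub measurable_const
  have hwm : Measurable w := hgwm.mul hkm
  have hw0 : ∀ᵐ z : Euc n, 0 ≤ w z := by
    filter_upwards [hk0] with z h0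
    exact mul_nonneg (KernelBarrier.exp_sym_nonneg _) h0
  have hgwb : ∀ z : Euc n, ‖z‖ < R →
      |Real.exp (lam * z i0) + Real.exp (-(lam * z i0)) - 2| ≤ 2 * Real.exp (lam * R) := by
    intro z hz
    have h1 : |lam * z i0| ≤ lam * R := by
      rw [abs_mul, abs_of_pos hlam]
      exact mul_le_mul_of_nonneg_left
        (le_trans (KernelBarrier.coord_abs_le z i0) hz.le) hlam.le
    have h2 := abs_le.1 h1
    rw [abs_of_nonneg (KernelBarrier.exp_sym_nonneg _)]
    have h3 : Real.exp (lam * z i0) ≤ Real.exp (lam * R) := Real.exp_le_exp.2 h2.2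
    have h4 : Real.exp (-(lam * z i0)) ≤ Real.exp (lam * R) := Real.exp_le_exp.2 (by linarith)
    linarith
  have hwAnn : ∀ ε : ℝ, 0 < ε → IntegrableOn w (Ann ε) := fun ε hε =>
    hAnnInt _ (2 * Real.exp (lam * R)) hgwm hgwb ε hε
  have hwInt : IntegrableOn w (ball (0 : Euc n) R) := by
    have hdom : IntegrableOn
        (fun z : Euc n => lam ^ 2 * Real.exp (lam * R) * κ₂ * ‖z‖ ^ (2 - p))
        (ball (0 : Euc n) R) := (KernelBarrier.int_ball hn h2p hR).const_mul _
    refine hdom.mono' hwm.aestronglyMeasurable.restrict ?_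
    filter_upwards [ae_restrict_of_ae hk_ub, ae_restrict_of_ae hk0, ae_restrict_of_ae hzne,
      ae_restrict_mem measurableSet_ball] with z h2 h0 hz0 hzb
    have hznorm : 0 < ‖z‖ := norm_pos_iff.2 hz0
    have hzR : ‖z‖ < R := mem_ball_zero_iff.1 hzb
    have habs : |lam * z i0| ≤ lam * R := by
      rw [abs_mul, abs_of_pos hlam]
      exact mul_le_mul_of_nonneg_left
        (le_trans (KernelBarrier.coord_abs_le z i0) hzR.le) hlam.le
    rw [hw_def, Real.norm_eq_abs,
      abs_of_nonneg (mul_nonneg (KernelBarrier.exp_sym_nonneg _) h0)]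
    have hkz : k z ≤ κ₂ / ‖z‖ ^ p := h2
    have step1 : (Real.exp (lam * z i0) + Real.exp (-(lam * z i0)) - 2) * k z ≤
        ((lam * z i0) ^ 2 * Real.exp |lam * z i0|) * (κ₂ / ‖z‖ ^ p) := by
      refine mul_le_mul (KernelBarrier.exp_sym_le _) hkz h0 ?_
      positivity
    have step2 : ((lam * z i0) ^ 2 * Real.exp |lam * z i0|) * (κ₂ / ‖z‖ ^ p) ≤
        (lam ^ 2 * ‖z‖ ^ 2 * Real.exp (lam * R)) * (κ₂ / ‖z‖ ^ p) := by
      refine mul_le_mul_of_nonneg_right ?_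
        (div_nonneg hκ₂.le (Real.rpow_nonneg (norm_nonneg z) p))
      have h5 : (lam * z i0) ^ 2 ≤ lam ^ 2 * ‖z‖ ^ 2 := by
        have h6 := abs_le.1 (KernelBarrier.coord_abs_le z i0)
        have h7 : z i0 ^ 2 ≤ ‖z‖ ^ 2 := sq_le_sq' (by linarith [h6.1]) h6.2
        calc (lam * z i0) ^ 2 = lam ^ 2 * z i0 ^ 2 := by ring
        _ ≤ lam ^ 2 * ‖z‖ ^ 2 := mul_le_mul_of_nonneg_left h7 (sq_nonneg lam)
      have h6 : Real.exp |lam * z i0| ≤ Real.exp (lam * R) := Real.exp_le_exp.2 habs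
      exact mul_le_mul h5 h6 (Real.exp_pos _).le (by positivity)
    have step3 : (lam ^ 2 * ‖z‖ ^ 2 * Real.exp (lam * R)) * (κ₂ / ‖z‖ ^ p) =
        lam ^ 2 * Real.exp (lam * R) * κ₂ * ‖z‖ ^ (2 - p) := by
      rw [Real.rpow_sub hznorm, Real.rpow_two]
      field_simp
    linarith [step1, step2, step3.le, step3.ge]
  -- symmetrization
  have hsym : ∀ ε : ℝ, 0 < ε →
      ∫ z in Ann ε, (1 - Real.exp (lam * z i0)) * k z = -(1 / 2) * ∫ z in Ann ε, w z := by
    intro ε hε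
    set F : Euc n → ℝ :=
      (Ann ε).indicator (fun z => (1 - Real.exp (lam * z i0)) * k z) with hF_def
    set G : Euc n → ℝ :=
      (Ann ε).indicator (fun z => (1 - Real.exp (-(lam * z i0))) * k z) with hG_def
    have hbnd1 : ∀ z : Euc n, ‖z‖ < R →
        |1 - Real.exp (lam * z i0)| ≤ 1 + Real.exp (lam * R) := by
      intro z hz
      have h1 : |lam * z i0| ≤ lam * R := by
        rw [abs_mul, abs_of_pos hlam]
        exact mul_le_mul_of_nonneg_left
          (le_trans (KernelBarrier.coord_abs_le z i0) hz.le) hlam.le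
      have h2 := abs_le.1 h1
      have h3 : Real.exp (lam * z i0) ≤ Real.exp (lam * R) := Real.exp_le_exp.2 h2.2
      have h4 := Real.exp_pos (lam * z i0)
      rw [abs_le]; constructor <;> linarith [Real.exp_pos (lam * R)]
    have hbnd2 : ∀ z : Euc n, ‖z‖ < R →
        |1 - Real.exp (-(lam * z i0))| ≤ 1 + Real.exp (lam * R) := by
      intro z hz
      have h1 : |lam * z i0| ≤ lam * R := by
        rw [abs_mul, abs_of_pos hlam]
        exact mul_le_mul_of_nonneg_left
          (le_trans (KernelBarrier.coord_abs_le z i0) hz.le) hlam.le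
      have h2 := abs_le.1 h1
      have h3 : Real.exp (-(lam * z i0)) ≤ Real.exp (lam * R) := Real.exp_le_exp.2 (by linarith)
      have h4 := Real.exp_pos (-(lam * z i0))
      rw [abs_le]; constructor <;> linarith [Real.exp_pos (lam * R)]
    have hm1 : Measurable fun z : Euc n => 1 - Real.exp (lam * z i0) :=
      measurable_const.sub (Real.measurable_exp.comp (hproj.const_mul lam))
    have hm2 : Measurable fun z : Euc n => 1 - Real.exp (-(lam * z i0)) :=
      measurable_const.sub (Real.measurable_exp.comp (hproj.const_mul lam).neg)
    have hFint : Integrable F := by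
      rw [hF_def, integrable_indicator_iff (hAnnMeas ε)]
      exact hAnnInt _ (1 + Real.exp (lam * R)) hm1 hbnd1 ε hε
    have hGint : Integrable G := by
      rw [hG_def, integrable_indicator_iff (hAnnMeas ε)]
      exact hAnnInt _ (1 + Real.exp (lam * R)) hm2 hbnd2 ε hε
    have hFG : ∀ z, F (-z) = G z := by
      intro z
      have hmem : -z ∈ Ann ε ↔ z ∈ Ann ε := by
        simp only [hAnn_def, mem_setOf_eq, norm_neg]
      by_cases hz : z ∈ Ann ε
      · rw [hF_def, hG_def, Set.indicator_of_mem (hmem.2 hz), Set.indicator_of_mem hz]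
        have happ : (-z) i0 = -(z i0) := rfl
        rw [happ, hksym z, mul_neg]
      · rw [hF_def, hG_def, Set.indicator_of_notMem (fun h => hz (hmem.1 h)),
          Set.indicator_of_notMem hz]
    have hGF : ∫ z, G z = ∫ z, F z := by
      calc ∫ z, G z = ∫ z, F (-z) := by
            refine integral_congr_ae (Eventually.of_forall fun z => ?_)
            exact (hFG z).symm
      _ = ∫ z, F z := by
            exact integral_neg_eq_self F volume
    have hFGsum : ∀ z, F z + G z = -((Ann ε).indicator w z) := by
      intro z
      by_cases hz : z ∈ Ann ε
      · rw [hF_def, hG_def, Set.indicator_of_mem hz, Set.indicator_of_mem hz,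
          Set.indicator_of_mem hz, hw_def]
        ring
      · rw [hF_def, hG_def, Set.indicator_of_notMem hz, Set.indicator_of_notMem hz,
          Set.indicator_of_notMem hz]
        ring
    have hkey : 2 * ∫ z, F z = -∫ z in Ann ε, w z := by
      have h1 : ∫ z, (F z + G z) = 2 * ∫ z, F z := by
        rw [integral_add hFint hGint, hGF]; ring
      have h2 : ∫ z, (F z + G z) = -∫ z in Ann ε, w z := by
        rw [show (fun z => F z + G z) = fun z => -((Ann ε).indicator w z) from funext hFGsum]
        rw [integral_neg, integral_indicator (hAnnMeas ε)]
      linarith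
    have hLHS : ∫ z in Ann ε, (1 - Real.exp (lam * z i0)) * k z = ∫ z, F z := by
      rw [hF_def, integral_indicator (hAnnMeas ε)]
    rw [hLHS]; linarith
  -- dominated convergence
  set W : ℝ := ∫ z in ball (0 : Euc n) R, w z with hW_def
  have hWtend : Tendsto (fun ε => ∫ z in Ann ε, w z) (𝓝[>] (0 : ℝ)) (𝓝 W) := by
    have hdct := tendsto_integral_filter_of_dominated_convergence (μ := volume)
      (l := 𝓝[>] (0 : ℝ)) (F := fun ε => (Ann ε).indicator w)
      (f := (ball (0 : Euc n) R).indicator w)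
      (bound := (ball (0 : Euc n) R).indicator fun z => |w z|)
      (Eventually.of_forall fun ε => (hwm.indicator (hAnnMeas ε)).aestronglyMeasurable)
      (Eventually.of_forall fun ε => Eventually.of_forall fun z => by
        show ‖(Ann ε).indicator w z‖ ≤ (ball (0 : Euc n) R).indicator (fun z => |w z|) z
        by_cases hz : z ∈ Ann ε
        · rw [Set.indicator_of_mem hz, Set.indicator_of_mem (hAnnBall ε hz)]
          exact le_refl _
        · rw [Set.indicator_of_notMem hz]
          simpa using Set.indicator_nonneg (fun z _ => abs_nonneg (w z)) z)
      ((integrable_indicator_iff measurableSet_ball).2 hwInt.abs)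
      ?_
    · have h1 : ∀ ε : ℝ, ∫ z, (Ann ε).indicator w z = ∫ z in Ann ε, w z :=
        fun ε => integral_indicator (hAnnMeas ε)
      have h2 : ∫ z, (ball (0 : Euc n) R).indicator w z = W :=
        (integral_indicator measurableSet_ball).trans hW_def.symm
      simpa only [h1, h2] using hdct
    · filter_upwards [hzne] with z hz0
      by_cases hzb : ‖z‖ < R
      · have hzpos : 0 < ‖z‖ := norm_pos_iff.2 hz0
        have hball : z ∈ ball (0 : Euc n) R := mem_ball_zero_iff.2 hzb
        refine Tendsto.congr' ?_ (tendsto_const_nhds (x := (ball (0 : Euc n) R).indicator w z))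
        refine eventuallyEq_of_mem (Ioo_mem_nhdsGT_of_mem ⟨le_refl 0, hzpos⟩) fun ε hε => ?_
        have hmem : z ∈ Ann ε := ⟨hε.2.le, hzb⟩
        rw [Set.indicator_of_mem hmem, Set.indicator_of_mem hball]
      · have h1 : ∀ ε : ℝ, (Ann ε).indicator w z = 0 :=
          fun ε => Set.indicator_of_notMem (fun h => hzb h.2) w
        have h2 : (ball (0 : Euc n) R).indicator w z = 0 :=
          Set.indicator_of_notMem (fun h => hzb (mem_ball_zero_iff.1 h)) w
        rw [h2]
        simpa only [h1] using tendsto_const_nhds (x := (0 : ℝ))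
  -- identification of the truncated integrals
  have hsplitT : ∀ ε : ℝ, ε ∈ Ioo (0 : ℝ) R →
      LkTrunc k v x ε = v x * (-(1 / 2) * ∫ z in Ann ε, w z) + Jout := by
    intro ε hε
    have hSet : {z : Euc n | ε ≤ ‖z‖} = Ann ε ∪ Out := by
      ext z
      simp only [hAnn_def, hOut_def, mem_setOf_eq, mem_union]
      constructor
      · intro h
        rcases lt_or_ge ‖z‖ R with h' | h'
        exacts [Or.inl ⟨h, h'⟩, Or.inr h']
      · rintro (⟨h, _⟩ | h)
        exacts [h, le_trans hε.2.le h]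
    have hdisj : Disjoint (Ann ε) Out := by
      rw [Set.disjoint_left]
      intro z hz1 hz2
      exact absurd hz2 (not_le.2 hz1.2)
    have hLkT : LkTrunc k v x ε = (∫ z in Ann ε, f z) + ∫ z in Out, f z := by
      rw [LkTrunc, hSet, ← hf_def, setIntegral_union hdisj hOutMeas (hfAnn ε hε.1) hfOut]
    rw [hLkT, hJ_def]
    congr 1
    have hcong : ∀ z ∈ Ann ε, f z = v x * ((1 - Real.exp (lam * z i0)) * k z) := by
      intro z hz
      have hxz : ‖x + z‖ < 2 * R :=
        lt_of_le_of_lt (norm_add_le x z) (by linarith [hz.2, hx'])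
      have hvxz : v (x + z) = Real.exp (lam * x i0) * Real.exp (lam * z i0) := by
        rw [hv (x + z), if_pos hxz, ← Real.exp_add]
        congr 1
        have happ : (x + z) i0 = x i0 + z i0 := rfl
        rw [happ]; ring
      simp only [hf_def]
      rw [hvxz, hvx]; ring
    rw [setIntegral_congr_fun (hAnnMeas ε) hcong, integral_const_mul, hsym ε hε.1]
  -- the limit
  set L : ℝ := v x * (-(1 / 2) * W) + Jout with hL_def
  have hLtend : Tendsto (LkTrunc k v x) (𝓝[>] (0 : ℝ)) (𝓝 L) := by
    have h1 : Tendsto (fun ε => v x * (-(1 / 2) * ∫ z in Ann ε, w z) + Jout)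
        (𝓝[>] (0 : ℝ)) (𝓝 L) := by
      rw [hL_def]
      exact ((hWtend.const_mul (-(1 / 2) : ℝ)).const_mul (v x)).add_const Jout
    exact h1.congr' (eventuallyEq_of_mem (Ioo_mem_nhdsGT_of_mem ⟨le_refl 0, hR⟩)
      fun ε hε => (hsplitT ε hε).symm)
  have hLk : Lk k v x = L := hLtend.limUnder_eq
  refine ⟨⟨L, hLtend⟩, ?_⟩
  rw [hLk]
  -- cap estimate
  set E : ℝ := Real.exp (lam * R / 2) with hE_def
  have hE_pos : 0 < E := Real.exp_pos _
  have hexpM : M ≤ E := by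
    have h1 : Real.log M ≤ lam * R / 2 := by linarith [hClog, hCl]
    calc M = Real.exp (Real.log M) := (Real.exp_log hMpos).symm
    _ ≤ E := Real.exp_le_exp.2 h1
  set cpt : Euc n := (3 * R / 4) • EuclideanSpace.single i0 (1 : ℝ) with hcpt_def
  have hcpt_i0 : cpt i0 = 3 * R / 4 := by
    rw [hcpt_def]
    have h1 : ((3 * R / 4) • EuclideanSpace.single i0 (1 : ℝ)) i0 =
        (3 * R / 4) * (EuclideanSpace.single i0 (1 : ℝ)) i0 := rfl
    rw [h1, EuclideanSpace.single_apply, if_pos rfl, mul_one]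
  have hcpt_norm : ‖cpt‖ = 3 * R / 4 := by
    rw [hcpt_def, norm_smul, EuclideanSpace.norm_single, Real.norm_eq_abs,
      abs_of_pos (by linarith : (0 : ℝ) < 3 * R / 4), norm_one, mul_one]
  have hcap_sub : ball cpt (R / 8) ⊆ ball (0 : Euc n) R := by
    intro z hz
    have h := mem_ball_iff_norm.1 hz
    rw [mem_ball_zero_iff]
    calc ‖z‖ = ‖z - cpt + cpt‖ := by rw [sub_add_cancel]
    _ ≤ ‖z - cpt‖ + ‖cpt‖ := norm_add_le _ _
    _ < R := by rw [hcpt_norm]; linarith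
  have hcap_coord : ∀ z ∈ ball cpt (R / 8), R / 2 ≤ z i0 := by
    intro z hz
    have h := mem_ball_iff_norm.1 hz
    have h2 : |z i0 - 3 * R / 4| ≤ ‖z - cpt‖ := by
      have happ : (z - cpt) i0 = z i0 - cpt i0 := rfl
      rw [← hcpt_i0, ← happ]
      exact KernelBarrier.coord_abs_le (z - cpt) i0
    have h3 := abs_le.1 (le_trans h2 h.le)
    linarith [h3.1]
  set capC : ℝ := E / 2 * (κ₁ / R ^ p) with hcapC_def
  have hcapC_pos : 0 < capC := by
    rw [hcapC_def]
    have := Real.rpow_pos_of_pos hR p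
    positivity
  have hwcap : ∀ᵐ z ∂(volume.restrict (ball cpt (R / 8))), capC ≤ w z := by
    filter_upwards [ae_restrict_of_ae hk_lb, ae_restrict_mem measurableSet_ball]
      with z hlb hzmem
    have hz1 : R / 2 ≤ z i0 := hcap_coord z hzmem
    have hzR : ‖z‖ < R := mem_ball_zero_iff.1 (hcap_sub hzmem)
    have hzpos : 0 < ‖z‖ :=
      lt_of_lt_of_le (by linarith) (le_trans (le_abs_self _) (KernelBarrier.coord_abs_le z i0))
    have ht : lam * R / 2 ≤ lam * z i0 := by
      have := mul_le_mul_of_nonneg_left hz1 hlam.le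
      linarith
    have hexp1 : E ≤ Real.exp (lam * z i0) := by
      rw [hE_def]; exact Real.exp_le_exp.2 ht
    have hexp4 : (4 : ℝ) ≤ Real.exp (lam * z i0) := le_trans (le_trans hM4 hexpM) hexp1
    have hkz : κ₁ / R ^ p ≤ k z := by
      refine le_trans ?_ hlb
      apply div_le_div_of_nonneg_left hκ₁.le (Real.rpow_pos_of_pos hzpos p)
      exact Real.rpow_le_rpow (norm_nonneg z) hzR.le hp0.le
    have hk0' : 0 ≤ k z :=
      le_trans (div_nonneg hκ₁.le (Real.rpow_nonneg (norm_nonneg z) p)) hlb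
    have hfac : E / 2 ≤ Real.exp (lam * z i0) + Real.exp (-(lam * z i0)) - 2 := by
      have h5 := Real.exp_pos (-(lam * z i0))
      linarith
    rw [hw_def, hcapC_def]
    refine mul_le_mul hfac hkz (div_nonneg hκ₁.le (Real.rpow_nonneg hR.le p)) ?_
    linarith [KernelBarrier.exp_sym_nonneg (lam * z i0)]
  have hcapvol : (volume (ball cpt (R / 8))).toReal = (R / 8) ^ n * vn := by
    rw [Measure.addHaar_ball _ _ (by linarith : (0 : ℝ) ≤ R / 8), finrank_euclideanSpace_fin,
      ENNReal.toReal_mul, ENNReal.toReal_ofReal (by positivity), hvn_def]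
  have hWlb : capC * ((R / 8) ^ n * vn) ≤ W := by
    have hwcapInt : IntegrableOn w (ball cpt (R / 8)) := hwInt.mono_set hcap_sub
    have h1 : capC * ((R / 8) ^ n * vn) ≤ ∫ z in ball cpt (R / 8), w z := by
      calc capC * ((R / 8) ^ n * vn) = (volume (ball cpt (R / 8))).toReal • capC := by
            rw [hcapvol, smul_eq_mul]; ring
      _ = ∫ _ in ball cpt (R / 8), capC := (setIntegral_const capC).symm
      _ ≤ ∫ z in ball cpt (R / 8), w z :=
            setIntegral_mono_ae_restrict
              (integrableOn_const (lt_of_le_of_lt (measure_mono hcap_sub)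
                measure_ball_lt_top).ne) hwcapInt hwcap
    refine le_trans h1 ?_
    rw [hW_def]
    exact setIntegral_mono_set hwInt (ae_restrict_of_ae hw0)
      (HasSubset.Subset.eventuallyLE hcap_sub)
  -- final arithmetic
  have hρ2 : ρ = R ^ (n : ℕ) / R ^ p := by
    rw [hρ_def, Real.rpow_sub hR, Real.rpow_natCast]
  have hRp_pos : (0 : ℝ) < R ^ p := Real.rpow_pos_of_pos hR p
  have hcapval : capC * ((R / 8) ^ n * vn) = 2 * c₁ * E * ρ := by
    rw [hcapC_def, hc1_def, hρ2, div_pow]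
    field_simp
    ring
  have hWlb' : 2 * c₁ * E * ρ ≤ W := hcapval ▸ hWlb
  have hMc : c₁ * M = 4 * c₁ + 2 * (κ₂ * cOut) := by
    rw [hM_def]; field_simp
  have hcE : 2 * (κ₂ * cOut) ≤ c₁ * E := by
    have h1 : c₁ * M ≤ c₁ * E := mul_le_mul_of_nonneg_left hexpM hc1.le
    linarith
  have hL1 : L ≤ v x * ρ * (κ₂ * cOut - c₁ * E) := by
    rw [hL_def]
    have h1 : v x * (-(1 / 2) * W) ≤ v x * (-(c₁ * E * ρ)) := by
      refine mul_le_mul_of_nonneg_left ?_ hvx_pos.le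
      linarith
    have h2 := hJout_le
    calc v x * (-(1 / 2) * W) + Jout ≤ v x * (-(c₁ * E * ρ)) + v x * (κ₂ * cOut * ρ) := by
          linarith
    _ = v x * ρ * (κ₂ * cOut - c₁ * E) := by ring
  have hL2 : L ≤ -(v x * ρ * (c₁ / 2 * E)) := by
    refine le_trans hL1 ?_
    have h1 : κ₂ * cOut - c₁ * E ≤ -(c₁ / 2 * E) := by linarith
    calc v x * ρ * (κ₂ * cOut - c₁ * E) ≤ v x * ρ * (-(c₁ / 2 * E)) :=
          mul_le_mul_of_nonneg_left h1 (by positivity)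
    _ = -(v x * ρ * (c₁ / 2 * E)) := by ring
  -- compare with the target
  have hρeq : ρ = (R ^ (2 * s))⁻¹ := by
    rw [hρ_def, show (n : ℝ) - p = -(2 * s) by rw [hp_def]; ring,
      Real.rpow_neg hR.le]
  have hR2s_pos : (0 : ℝ) < R ^ (2 * s) := Real.rpow_pos_of_pos hR _
  have hR12s : R ^ (1 + 2 * s) = R * R ^ (2 * s) := by
    rw [Real.rpow_add hR, Real.rpow_one]
  have hlamR_pos : 0 < lam * R := by positivity
  have hkey : 2 / c₁ ≤ C * (lam * R) := by
    calc 2 / c₁ ≤ C := hC2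
    _ ≤ C * (lam * R) := by
        have := mul_le_mul_of_nonneg_left (le_trans hC1 hCl) hCpos.le
        linarith
  have h5 : 1 / (C * (lam * R)) ≤ c₁ / 2 := by
    have h6 : 0 < 2 / c₁ := by positivity
    have h7 := one_div_le_one_div_of_le h6 hkey
    calc 1 / (C * (lam * R)) ≤ 1 / (2 / c₁) := h7
    _ = c₁ / 2 := by field_simp
  have heq2 : 1 / C * (E / (lam * R ^ (1 + 2 * s))) = 1 / (C * (lam * R)) * (E * ρ) := by
    rw [hR12s, hρeq]
    rw [div_mul_eq_mul_div, div_mul_eq_mul_div, one_mul, one_mul, div_div]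
    rw [div_eq_div_iff (by positivity) (by positivity)]
    field_simp
  have h8 : 1 / C * (E / (lam * R ^ (1 + 2 * s))) ≤ ρ * (c₁ / 2 * E) := by
    rw [heq2]
    calc 1 / (C * (lam * R)) * (E * ρ) ≤ c₁ / 2 * (E * ρ) :=
          mul_le_mul_of_nonneg_right h5 (by positivity)
    _ = ρ * (c₁ / 2 * E) := by ring
  have h9 : 1 / C * (E / (lam * R ^ (1 + 2 * s))) * v x ≤ v x * ρ * (c₁ / 2 * E) := by
    calc 1 / C * (E / (lam * R ^ (1 + 2 * s))) * v x ≤ ρ * (c₁ / 2 * E) * v x :=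
          mul_le_mul_of_nonneg_right h8 hvx_pos.le
    _ = v x * ρ * (c₁ / 2 * E) := by ring
  calc L ≤ -(v x * ρ * (c₁ / 2 * E)) := hL2
  _ ≤ -(1 / C * (E / (lam * R ^ (1 + 2 * s))) * v x) := by linarith
  _ = -(1 / C) * (E / (lam * R ^ (1 + 2 * s))) * v x := by ring
end

section
/- Let Ω ⊂ ℝⁿ be a bounded open set with Lipschitz boundary and k be an admissible kernel with parameters (s, κ₁, κ₂), s ∈ (0, 1/2), κ₂ ≥ κ₁ > 0. Let u ∈ C^{0,1}(Ω) ∩ C⁰(ℝⁿ) with u = 0 in ℝⁿ∖Ω. Then L_k u ∈ C^{1−2s}(Ω) and ‖L_k u‖_{C^{1−2s}(Ω)} ≤ C ‖Du‖_{L^∞(Ω)}, for some constant C > 0 depending only on n, s, κ₂, and diam(Ω). -/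
open Filter MeasureTheory Metric Set
open scoped Topology NNReal ENNReal

section Helpers

open Module

lemma integrableOn_ball_rpow (n : ℕ) {p : ℝ} (hp : -(n : ℝ) < p) (hp0 : p < 0) :
    IntegrableOn (fun z : Euc n => ‖z‖ ^ p) (ball (0 : Euc n) 1) volume := by
  have hmeas : Measurable fun z : Euc n => ‖z‖ ^ p := by fun_prop
  constructor
  · exact hmeas.aestronglyMeasurable
  · rw [HasFiniteIntegral,
      show (∫⁻ z in ball (0 : Euc n) 1, ‖‖z‖ ^ p‖ₑ) =
        ∫⁻ z in ball (0 : Euc n) 1, ENNReal.ofReal (‖z‖ ^ p) from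
        lintegral_congr fun z => by
          rw [← Real.enorm_eq_ofReal (Real.rpow_nonneg (norm_nonneg _) _)]]
    set μ' := volume.restrict (ball (0 : Euc n) 1)
    rw [lintegral_eq_lintegral_meas_le μ'
      (Eventually.of_forall fun z => Real.rpow_nonneg (norm_nonneg _) _)
      hmeas.aemeasurable]
    have hsub : ∀ t : ℝ, 0 < t →
        {z : Euc n | t ≤ ‖z‖ ^ p} ⊆ closedBall (0 : Euc n) (t ^ p⁻¹) := by
      intro t ht z hz
      simp only [mem_setOf_eq] at hz
      have hz0 : z ≠ 0 := by
        rintro rfl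
        rw [norm_zero, Real.zero_rpow hp0.ne] at hz
        exact absurd (ht.trans_le hz) (lt_irrefl 0)
      have hzpos : 0 < ‖z‖ := norm_pos_iff.mpr hz0
      rw [mem_closedBall_zero_iff]
      exact (Real.le_rpow_inv_iff_of_neg hzpos ht hp0).mpr hz
    have hVlt : volume (ball (0 : Euc n) 1) < ∞ := measure_ball_lt_top
    calc
      ∫⁻ t in Ioi (0:ℝ), μ' {z | t ≤ ‖z‖ ^ p}
          ≤ ∫⁻ t in Ioc (0:ℝ) 1 ∪ Ioi 1, μ' {z | t ≤ ‖z‖ ^ p} :=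
        lintegral_mono_set Ioi_subset_Ioc_union_Ioi
      _ ≤ (∫⁻ t in Ioc (0:ℝ) 1, μ' {z | t ≤ ‖z‖ ^ p}) +
            ∫⁻ t in Ioi (1:ℝ), μ' {z | t ≤ ‖z‖ ^ p} := lintegral_union_le _ _ _
      _ < ∞ := by
        refine ENNReal.add_lt_top.2 ⟨?_, ?_⟩
        · calc
            (∫⁻ t in Ioc (0:ℝ) 1, μ' {z | t ≤ ‖z‖ ^ p})
                ≤ ∫⁻ _ in Ioc (0:ℝ) 1, volume (ball (0 : Euc n) 1) := by
              refine setLIntegral_mono' measurableSet_Ioc fun t _ => ?_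
              exact (measure_mono (subset_univ _)).trans_eq (Measure.restrict_apply_univ _)
            _ ≤ volume (ball (0 : Euc n) 1) * 1 := by
              rw [setLIntegral_const]
              gcongr
              simp [Real.volume_Ioc]
            _ < ∞ := by simpa using hVlt
        · have hq : (n : ℝ) * p⁻¹ < -1 := by
            rw [← div_eq_mul_inv, div_lt_iff_of_neg hp0]
            linarith
          calc
            (∫⁻ t in Ioi (1:ℝ), μ' {z | t ≤ ‖z‖ ^ p})
                ≤ ∫⁻ t in Ioi (1:ℝ),
                    ENNReal.ofReal (t ^ ((n : ℝ) * p⁻¹)) * volume (ball (0 : Euc n) 1) := by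
              refine setLIntegral_mono' measurableSet_Ioi fun t ht => ?_
              have ht0 : (0:ℝ) < t := lt_trans one_pos ht
              calc μ' {z | t ≤ ‖z‖ ^ p}
                  ≤ volume (closedBall (0 : Euc n) (t ^ p⁻¹)) :=
                    le_trans (Measure.restrict_apply_le _ _) (measure_mono (hsub t ht0))
                _ = ENNReal.ofReal ((t ^ p⁻¹) ^ finrank ℝ (Euc n)) * volume (ball (0 : Euc n) 1) :=
                    Measure.addHaar_closedBall _ _ (Real.rpow_nonneg ht0.le _)
                _ = ENNReal.ofReal (t ^ ((n : ℝ) * p⁻¹)) * volume (ball (0 : Euc n) 1) := by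
                    rw [← Real.rpow_natCast (t ^ p⁻¹) (finrank ℝ (Euc n)),
                      ← Real.rpow_mul ht0.le, finrank_euclideanSpace_fin, mul_comm p⁻¹]
            _ = (∫⁻ t in Ioi (1:ℝ), ENNReal.ofReal (t ^ ((n : ℝ) * p⁻¹))) *
                  volume (ball (0 : Euc n) 1) := by
              rw [lintegral_mul_const' _ _ hVlt.ne]
            _ < ∞ := by
              refine ENNReal.mul_lt_top ?_ hVlt
              exact (integrableOn_Ioi_rpow_of_lt hq one_pos).setLIntegral_lt_top

lemma integrableOn_compl_ball_rpow (n : ℕ) {q : ℝ} (hq : q < -(n : ℝ)) :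
    IntegrableOn (fun z : Euc n => ‖z‖ ^ q) (ball (0 : Euc n) 1)ᶜ volume := by
  have hr : (finrank ℝ (Euc n) : ℝ) < -q := by
    rw [finrank_euclideanSpace_fin]; linarith
  have hint : Integrable (fun z : Euc n => (2:ℝ) ^ (-q) * (1 + ‖z‖) ^ (-(-q))) volume :=
    (integrable_one_add_norm hr).const_mul _
  refine (hint.integrableOn).mono' ?_ ?_
  · exact (by fun_prop : Measurable fun z : Euc n => ‖z‖ ^ q).aestronglyMeasurable
  · refine (ae_restrict_iff' (measurableSet_ball.compl)).2 (Eventually.of_forall fun z hz => ?_)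
    have hz1 : (1:ℝ) ≤ ‖z‖ := by
      simpa [not_lt] using (mem_compl_iff _ _).mp hz
    have hz0 : (0:ℝ) < ‖z‖ := lt_of_lt_of_le one_pos hz1
    rw [Real.norm_eq_abs, abs_of_nonneg (Real.rpow_nonneg (norm_nonneg _) _), neg_neg]
    have h1 : (1:ℝ) + ‖z‖ ≤ 2 * ‖z‖ := by linarith
    have h2 : (2 * ‖z‖ : ℝ) ^ q ≤ ((1:ℝ) + ‖z‖) ^ q :=
      Real.rpow_le_rpow_of_nonpos (by linarith) h1 (le_of_lt (by linarith : q < 0))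
    have h3 : (2 * ‖z‖ : ℝ) ^ q = 2 ^ q * ‖z‖ ^ q :=
      Real.mul_rpow (by norm_num) (norm_nonneg _)
    calc ‖z‖ ^ q = 2 ^ (-q) * (2 ^ q * ‖z‖ ^ q) := by
          rw [← mul_assoc, ← Real.rpow_add two_pos]; simp
      _ ≤ 2 ^ (-q) * (1 + ‖z‖) ^ q := by
          rw [← h3]
          exact mul_le_mul_of_nonneg_left h2 (Real.rpow_nonneg (by norm_num) _)


lemma scale_rpow {n : ℕ} (p : ℝ) {S T : Set (Euc n)} (hS : MeasurableSet S) (hT : MeasurableSet T)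
    {ρ : ℝ} (hρ : 0 < ρ) (hST : ∀ x : Euc n, ρ⁻¹ • x ∈ S ↔ x ∈ T)
    (hI : IntegrableOn (fun z : Euc n => ‖z‖ ^ p) S volume) :
    IntegrableOn (fun z : Euc n => ‖z‖ ^ p) T volume ∧
      ∫ z in T, ‖z‖ ^ p = ρ ^ ((n : ℝ) + p) * ∫ z in S, ‖z‖ ^ p := by
  set F : Euc n → ℝ := S.indicator (fun z => ‖z‖ ^ p) with hF_def
  have hF : Integrable F volume := (integrable_indicator_iff hS).2 hI
  have hc : (0:ℝ) < ρ⁻¹ ^ p := Real.rpow_pos_of_pos (inv_pos.2 hρ) _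
  have key : (fun x : Euc n => F (ρ⁻¹ • x)) =
      fun x => ρ⁻¹ ^ p * T.indicator (fun z => ‖z‖ ^ p) x := by
    funext x
    by_cases hx : x ∈ T
    · rw [hF_def, Set.indicator_of_mem ((hST x).2 hx), Set.indicator_of_mem hx,
        norm_smul, Real.norm_eq_abs, abs_of_pos (inv_pos.2 hρ),
        Real.mul_rpow (inv_pos.2 hρ).le (norm_nonneg _)]
    · rw [hF_def, Set.indicator_of_notMem (fun h => hx ((hST x).1 h)),
        Set.indicator_of_notMem hx, mul_zero]
  have h2 : Integrable (fun x : Euc n => F (ρ⁻¹ • x)) volume :=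
    hF.comp_smul (inv_ne_zero hρ.ne')
  rw [key] at h2
  have h3 : Integrable (T.indicator (fun z : Euc n => ‖z‖ ^ p)) volume := by
    have := h2.const_mul (ρ⁻¹ ^ p)⁻¹
    simpa [← mul_assoc, inv_mul_cancel₀ hc.ne'] using this
  refine ⟨(integrable_indicator_iff hT).1 h3, ?_⟩
  have h4 : ∫ x : Euc n, F (ρ⁻¹ • x) = ρ ^ finrank ℝ (Euc n) • ∫ x, F x :=
    Measure.integral_comp_inv_smul_of_nonneg volume F hρ.le
  rw [key] at h4
  rw [integral_const_mul, integral_indicator hT, hF_def, integral_indicator hS] at h4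
  have hρn : (ρ : ℝ) ^ finrank ℝ (Euc n) = ρ ^ (n : ℝ) := by
    rw [finrank_euclideanSpace_fin, ← Real.rpow_natCast]
  have hinv : (ρ⁻¹ : ℝ) ^ p = (ρ ^ p)⁻¹ := Real.inv_rpow hρ.le p
  rw [hinv] at h4
  have hρp : (0:ℝ) < ρ ^ p := Real.rpow_pos_of_pos hρ _
  field_simp at h4
  rw [Real.rpow_add hρ, ← hρn]
  rw [h4, finrank_euclideanSpace_fin]; ring


lemma lip_zero_boundary {n : ℕ} {Ω : Set (Euc n)} (hΩo : IsOpen Ω) {u : Euc n → ℝ} {M : ℝ}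
    (hM : 0 ≤ M) (hu : Continuous u) (hu0 : ∀ x ∉ Ω, u x = 0)
    (hlip : ∀ x ∈ Ω, ∀ y ∈ Ω, |u x - u y| ≤ M * ‖x - y‖) :
    ∀ a b : Euc n, |u a - u b| ≤ M * ‖a - b‖ := by
  have key : ∀ x ∈ Ω, ∀ y ∉ Ω, |u x| ≤ M * ‖x - y‖ := by
    intro x hx y hy
    set φ : ℝ → Euc n := fun t => x + t • (y - x) with hφ_def
    have hφc : Continuous φ := by fun_prop
    set A : Set ℝ := Icc 0 1 ∩ φ ⁻¹' Ωᶜ with hA_def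
    have hA_closed : IsClosed A :=
      isClosed_Icc.inter (hΩo.isClosed_compl.preimage hφc)
    have hφ1 : φ 1 = y := by simp [hφ_def]
    have hA1 : (1:ℝ) ∈ A := ⟨⟨zero_le_one, le_rfl⟩, by simp [hφ1, hy]⟩
    have hne : A.Nonempty := ⟨1, hA1⟩
    have hbdd : BddBelow A := ⟨0, fun t ht => ht.1.1⟩
    set t₀ : ℝ := sInf A with ht₀_def
    have htA : t₀ ∈ A := hA_closed.csInf_mem hne hbdd
    have ht0 : 0 ≤ t₀ := htA.1.1
    have ht1 : t₀ ≤ 1 := htA.1.2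
    have huφ : u (φ t₀) = 0 := hu0 _ htA.2
    have hnorm : ∀ t : ℝ, 0 ≤ t → ‖x - φ t‖ = t * ‖y - x‖ := by
      intro t ht
      have : x - φ t = -(t • (y - x)) := by simp [hφ_def]
      rw [this, norm_neg, norm_smul, Real.norm_eq_abs, abs_of_nonneg ht]
    have hseg : ∀ t : ℝ, 0 ≤ t → t < t₀ → |u x - u (φ t)| ≤ M * (t * ‖y - x‖) := by
      intro t ht htlt
      have hmem : φ t ∈ Ω := by
        by_contra h
        exact absurd (csInf_le hbdd ⟨⟨ht, le_trans htlt.le ht1⟩, h⟩) (not_le.2 htlt)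
      calc |u x - u (φ t)| ≤ M * ‖x - φ t‖ := hlip x hx _ hmem
        _ = M * (t * ‖y - x‖) := by rw [hnorm t ht]
    have hfin : |u x - u (φ t₀)| ≤ M * (t₀ * ‖y - x‖) := by
      rcases eq_or_lt_of_le ht0 with h0 | h0
      · have : φ t₀ = x := by simp [hφ_def, ← h0]
        simp [this, mul_nonneg hM (mul_nonneg ht0 (norm_nonneg _))]
      · have hten : Tendsto (fun t => |u x - u (φ t)|) (𝓝[<] t₀)
            (𝓝 (|u x - u (φ t₀)|)) :=
          ((continuous_const.sub (hu.comp hφc)).abs.tendsto t₀).mono_left nhdsWithin_le_nhds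
        have hIoo : Ioo (0:ℝ) t₀ ∈ 𝓝[<] t₀ := Ioo_mem_nhdsLT_of_mem ⟨h0, le_rfl⟩
        refine le_of_tendsto hten ?_
        filter_upwards [hIoo] with t ht
        calc |u x - u (φ t)| ≤ M * (t * ‖y - x‖) := hseg t ht.1.le ht.2
          _ ≤ M * (t₀ * ‖y - x‖) := by
            apply mul_le_mul_of_nonneg_left _ hM
            exact mul_le_mul_of_nonneg_right ht.2.le (norm_nonneg _)
    calc |u x| = |u x - u (φ t₀)| := by rw [huφ, sub_zero]
      _ ≤ M * (t₀ * ‖y - x‖) := hfin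
      _ ≤ M * (1 * ‖y - x‖) := by
          apply mul_le_mul_of_nonneg_left _ hM
          exact mul_le_mul_of_nonneg_right ht1 (norm_nonneg _)
      _ = M * ‖x - y‖ := by rw [one_mul, norm_sub_rev]
  intro a b
  by_cases ha : a ∈ Ω <;> by_cases hb : b ∈ Ω
  · exact hlip a ha b hb
  · rw [hu0 b hb, sub_zero]; exact key a ha b hb
  · rw [abs_sub_comm, hu0 a ha, sub_zero, norm_sub_rev]
    exact key b hb a ha
  · rw [hu0 a ha, hu0 b hb, sub_self, abs_zero]
    positivity

end Helpers

set_option maxHeartbeats 2000000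

/-- For `s < 1/2`, `L_k` maps Lipschitz functions vanishing outside
`Ω` to `C^{1-2s}(Ω)`, with `‖L_k u‖_{C^{1-2s}(Ω)} ≤ C ‖Du‖_{L^∞(Ω)}`. -/
theorem Lk_of_lipschitz_s_small
    (n : ℕ) (s κ₁ κ₂ : ℝ) (Ω : Set (Euc n))
    (hs : s ∈ Set.Ioo (0 : ℝ) (1 / 2)) (hκ₁ : 0 < κ₁) (hκ : κ₁ ≤ κ₂)
    (hΩo : IsOpen Ω) (hΩb : Bornology.IsBounded Ω) (hΩlip : BoundaryLipschitz n Ω) :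
    ∃ C > (0 : ℝ), ∀ k : Euc n → ℝ, IsAdmissibleKernel n s κ₁ κ₂ k →
      ∀ u : Euc n → ℝ, ∀ M : ℝ, 0 ≤ M → Continuous u →
      (∀ x ∉ Ω, u x = 0) → (∀ x ∈ Ω, ∀ y ∈ Ω, |u x - u y| ≤ M * ‖x - y‖) →
      (∀ x ∈ Ω, LkExistsAt k u x) ∧
      (∀ x ∈ Ω, |Lk k u x| ≤ C * M) ∧
      ∀ x ∈ Ω, ∀ y ∈ Ω, |Lk k u x - Lk k u y| ≤ C * M * ‖x - y‖ ^ (1 - 2 * s) := by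
  obtain ⟨R, hR1, hRΩ⟩ : ∃ R : ℝ, 1 ≤ R ∧ Ω ⊆ ball (0 : Euc n) R := by
    obtain ⟨r, hr⟩ := hΩb.subset_ball (0 : Euc n)
    exact ⟨max r 1, le_max_right _ _, hr.trans (ball_subset_ball (le_max_left _ _))⟩
  rcases Nat.eq_zero_or_pos n with hn | hn
  · subst hn
    refine ⟨1, one_pos, ?_⟩
    intro k hk u M hM hu hu0 hlip
    have hset : ∀ ε : ℝ, 0 < ε → {z : Euc 0 | ε ≤ ‖z‖} = (∅ : Set (Euc 0)) := by
      intro ε hε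
      ext z
      simp only [mem_setOf_eq, mem_empty_iff_false, iff_false, not_le]
      rw [Subsingleton.elim z 0, norm_zero]
      exact hε
    have hhas : ∀ x : Euc 0, LkHas k u x 0 := by
      intro x
      show Tendsto (LkTrunc k u x) (𝓝[>] (0 : ℝ)) (𝓝 0)
      refine Tendsto.congr' ?_ tendsto_const_nhds
      filter_upwards [self_mem_nhdsWithin] with ε hε
      show (0:ℝ) = LkTrunc k u x ε
      rw [LkTrunc, hset ε hε, Measure.restrict_empty, integral_zero_measure]
    have hLk : ∀ x : Euc 0, Lk k u x = 0 := fun x => (hhas x).limUnder_eq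
    refine ⟨fun x _ => ⟨0, hhas x⟩, fun x _ => ?_, fun x _ y _ => ?_⟩
    · rw [hLk x, abs_zero, one_mul]; exact hM
    · rw [hLk x, hLk y, sub_self, abs_zero]
      exact mul_nonneg (mul_nonneg zero_le_one hM) (Real.rpow_nonneg (norm_nonneg _) _)
  · have hs0 : 0 < s := hs.1
    have hs2 : 2 * s < 1 := by have := hs.2; linarith
    have hκ₂ : 0 < κ₂ := lt_of_lt_of_le hκ₁ hκ
    have hn1 : (1:ℝ) ≤ (n:ℝ) := by exact_mod_cast hn
    set p : ℝ := 1 - (n:ℝ) - 2 * s with hp_def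
    set q : ℝ := -((n : ℝ) + 2 * s) with hq_def
    have hp : -(n:ℝ) < p := by rw [hp_def]; linarith
    have hp0 : p < 0 := by rw [hp_def]; linarith
    have hq0 : q < -(n:ℝ) := by rw [hq_def]; linarith
    have hA := integrableOn_ball_rpow n hp hp0
    have hB := integrableOn_compl_ball_rpow n hq0
    set A₁ : ℝ := ∫ z in ball (0:Euc n) 1, ‖z‖ ^ p with hA₁_def
    set B₁ : ℝ := ∫ z in (ball (0:Euc n) 1)ᶜ, ‖z‖ ^ q with hB₁_def
    have hA₁0 : 0 ≤ A₁ :=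
      setIntegral_nonneg measurableSet_ball fun z _ => Real.rpow_nonneg (norm_nonneg _) _
    have hB₁0 : 0 ≤ B₁ :=
      setIntegral_nonneg measurableSet_ball.compl fun z _ => Real.rpow_nonneg (norm_nonneg _) _
    set D : ℝ := 3 * R with hD_def
    have hD0 : 0 < D := by rw [hD_def]; linarith
    set C : ℝ := κ₂ * (A₁ + 2 * D * B₁) + 2 * κ₂ * (A₁ + B₁) + 1 with hC_def
    have hC0 : 0 < C := by
      have h1 : 0 ≤ κ₂ * (A₁ + 2 * D * B₁) :=
        mul_nonneg hκ₂.le (add_nonneg hA₁0 (mul_nonneg (by linarith) hB₁0))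
      have h2 : 0 ≤ 2 * κ₂ * (A₁ + B₁) :=
        mul_nonneg (by linarith) (add_nonneg hA₁0 hB₁0)
      rw [hC_def]; linarith
    refine ⟨C, hC0, ?_⟩
    intro k hk u M hM hu hu0 hlipΩ
    obtain ⟨hkm, hksymm, hkae⟩ := hk
    have hlip := lip_zero_boundary hΩo hM hu hu0 hlipΩ
    -- boundedness of u
    have hubd : ∀ a : Euc n, |u a| ≤ M * D := by
      intro a
      by_cases haΩ : a ∈ Ω
      · set y : Euc n := (2 * R) • EuclideanSpace.single (⟨0, hn⟩ : Fin n) (1:ℝ) with hy_def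
        have hyn : ‖y‖ = 2 * R := by
          rw [hy_def, norm_smul, Real.norm_eq_abs, abs_of_pos (by linarith : (0:ℝ) < 2 * R),
            EuclideanSpace.norm_single, norm_one, mul_one]
        have hyΩ : y ∉ Ω := by
          intro h
          have := mem_ball_zero_iff.1 (hRΩ h)
          rw [hyn] at this
          linarith
        have haR : ‖a‖ < R := mem_ball_zero_iff.1 (hRΩ haΩ)
        calc |u a| = |u a - u y| := by rw [hu0 y hyΩ, sub_zero]
          _ ≤ M * ‖a - y‖ := hlip a y
          _ ≤ M * D := by
              refine mul_le_mul_of_nonneg_left ?_ hM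
              calc ‖a - y‖ ≤ ‖a‖ + ‖y‖ := norm_sub_le _ _
                _ ≤ D := by rw [hyn, hD_def]; linarith
      · rw [hu0 a haΩ, abs_zero]
        exact mul_nonneg hM hD0.le
    -- a.e. facts about the kernel
    haveI hnt : Nontrivial (Euc n) := by
      refine ⟨EuclideanSpace.single (⟨0, hn⟩ : Fin n) (1:ℝ), 0, fun h => ?_⟩
      have : ‖EuclideanSpace.single (⟨0, hn⟩ : Fin n) (1:ℝ)‖ = 1 := by
        rw [EuclideanSpace.norm_single, norm_one]
      rw [h, norm_zero] at this
      exact one_ne_zero this.symm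
    have hkb : ∀ᵐ z : Euc n ∂(volume : Measure (Euc n)), |k z| ≤ κ₂ * ‖z‖ ^ q ∧ z ≠ 0 := by
      have h0ae : ∀ᵐ z : Euc n ∂(volume : Measure (Euc n)), z ≠ 0 := by
        rw [ae_iff]
        simp only [not_not, Set.setOf_eq_eq_singleton]
        exact measure_singleton 0
      filter_upwards [hkae, h0ae] with z hz hz0
      obtain ⟨h1, h2⟩ := hz
      have heq : κ₂ / ‖z‖ ^ ((n : ℝ) + 2 * s) = κ₂ * ‖z‖ ^ q := by
        rw [hq_def, Real.rpow_neg (norm_nonneg _), div_eq_mul_inv]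
      have hk0 : 0 ≤ k z :=
        le_trans (div_nonneg hκ₁.le (Real.rpow_nonneg (norm_nonneg _) _)) h1
      rw [abs_of_nonneg hk0]
      exact ⟨heq ▸ h2, hz0⟩
    have hmul_pq : ∀ z : Euc n, z ≠ 0 → ‖z‖ * ‖z‖ ^ q = ‖z‖ ^ p := by
      intro z hz
      have hzn : 0 < ‖z‖ := norm_pos_iff.mpr hz
      rw [show p = 1 + q by rw [hp_def, hq_def]; ring, Real.rpow_add hzn, Real.rpow_one]
    -- scaled integrals
    have hballST : ∀ ρ : ℝ, 0 < ρ → ∀ z : Euc n,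
        ρ⁻¹ • z ∈ ball (0:Euc n) 1 ↔ z ∈ ball (0:Euc n) ρ := by
      intro ρ hρ z
      rw [mem_ball_zero_iff, mem_ball_zero_iff, norm_smul, Real.norm_eq_abs,
        abs_of_pos (inv_pos.2 hρ)]
      have hinv : ρ⁻¹ * ρ = 1 := inv_mul_cancel₀ hρ.ne'
      constructor <;> intro h <;> nlinarith [norm_nonneg z, inv_pos.2 hρ]
    have hnp : (n:ℝ) + p = 1 - 2*s := by rw [hp_def]; ring
    have hnq : (n:ℝ) + q = -(2*s) := by rw [hq_def]; ring
    have hscaleA : ∀ ρ : ℝ, 0 < ρ →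
        IntegrableOn (fun z : Euc n => ‖z‖ ^ p) (ball (0:Euc n) ρ) volume ∧
          (∫ z in ball (0:Euc n) ρ, ‖z‖ ^ p) = ρ ^ (1 - 2*s) * A₁ := by
      intro ρ hρ
      obtain ⟨h1, h2⟩ :=
        scale_rpow p measurableSet_ball measurableSet_ball hρ (hballST ρ hρ) hA
      exact ⟨h1, by rw [h2, hnp]⟩
    have hscaleB : ∀ ρ : ℝ, 0 < ρ →
        IntegrableOn (fun z : Euc n => ‖z‖ ^ q) (ball (0:Euc n) ρ)ᶜ volume ∧
          (∫ z in (ball (0:Euc n) ρ)ᶜ, ‖z‖ ^ q) = ρ ^ (-(2*s)) * B₁ := by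
      intro ρ hρ
      have hST : ∀ z : Euc n, ρ⁻¹ • z ∈ (ball (0:Euc n) 1)ᶜ ↔ z ∈ (ball (0:Euc n) ρ)ᶜ := by
        intro z
        rw [mem_compl_iff, mem_compl_iff, not_iff_not]
        exact hballST ρ hρ z
      obtain ⟨h1, h2⟩ :=
        scale_rpow q measurableSet_ball.compl measurableSet_ball.compl hρ hST hB
      exact ⟨h1, by rw [h2, hnq]⟩
    -- the core estimate
    have core : ∀ w : Euc n → ℝ, Continuous w → ∀ a b ρ : ℝ, 0 ≤ a → 0 ≤ b → 0 < ρ →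
        (∀ z, |w z| ≤ a * ‖z‖) → (∀ z, |w z| ≤ b) →
        Integrable (fun z : Euc n => w z * k z) volume ∧
          |∫ z : Euc n, w z * k z| ≤
            κ₂ * (a * (A₁ * ρ ^ (1 - 2*s)) + b * (B₁ * ρ ^ (-(2*s)))) := by
      intro w hw a b ρ ha hb hρ hw1 hw2
      obtain ⟨hIball, hIballval⟩ := hscaleA ρ hρ
      obtain ⟨hIc, hIcval⟩ := hscaleB ρ hρ
      set G : Euc n → ℝ := fun z =>
        κ₂ * ((ball (0:Euc n) ρ).indicator (fun z => a * ‖z‖ ^ p) z +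
          ((ball (0:Euc n) ρ)ᶜ).indicator (fun z => b * ‖z‖ ^ q) z) with hG_def
      have hG1 : Integrable ((ball (0:Euc n) ρ).indicator (fun z : Euc n => a * ‖z‖ ^ p))
          volume := (integrable_indicator_iff measurableSet_ball).2 (hIball.const_mul a)
      have hG2 : Integrable (((ball (0:Euc n) ρ)ᶜ).indicator (fun z : Euc n => b * ‖z‖ ^ q))
          volume := (integrable_indicator_iff measurableSet_ball.compl).2 (hIc.const_mul b)
      have hGint : Integrable G volume := by
        rw [hG_def]
        exact (hG1.add hG2).const_mul κ₂
      have hpt : ∀ᵐ z : Euc n ∂(volume : Measure (Euc n)), ‖w z * k z‖ ≤ G z := by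
        filter_upwards [hkb] with z hz
        obtain ⟨hzk, hz0⟩ := hz
        have hzn : 0 < ‖z‖ := norm_pos_iff.mpr hz0
        rw [Real.norm_eq_abs, abs_mul]
        by_cases hzb : z ∈ ball (0:Euc n) ρ
        · rw [hG_def]
          simp only
          rw [Set.indicator_of_mem hzb, Set.indicator_of_notMem (by simpa using hzb), add_zero]
          calc |w z| * |k z| ≤ (a * ‖z‖) * (κ₂ * ‖z‖ ^ q) :=
                mul_le_mul (hw1 z) hzk (abs_nonneg _) (mul_nonneg ha (norm_nonneg _))
            _ = κ₂ * (a * (‖z‖ * ‖z‖ ^ q)) := by ring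
            _ = κ₂ * (a * ‖z‖ ^ p) := by rw [hmul_pq z hz0]
        · rw [hG_def]
          simp only
          rw [Set.indicator_of_notMem hzb, Set.indicator_of_mem (by simpa using hzb), zero_add]
          calc |w z| * |k z| ≤ b * (κ₂ * ‖z‖ ^ q) :=
                mul_le_mul (hw2 z) hzk (abs_nonneg _) hb
            _ = κ₂ * (b * ‖z‖ ^ q) := by ring
      have hfint : Integrable (fun z : Euc n => w z * k z) volume :=
        hGint.mono' ((hw.measurable.mul hkm).aestronglyMeasurable) hpt
      refine ⟨hfint, ?_⟩
      have hGval : ∫ z : Euc n, G z =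
          κ₂ * (a * (A₁ * ρ ^ (1 - 2*s)) + b * (B₁ * ρ ^ (-(2*s)))) := by
        rw [hG_def]
        simp only
        rw [integral_const_mul, integral_add hG1 hG2,
          integral_indicator measurableSet_ball, integral_indicator measurableSet_ball.compl,
          integral_const_mul, integral_const_mul, hIballval, hIcval]
        ring
      calc |∫ z : Euc n, w z * k z| ≤ ∫ z : Euc n, ‖w z * k z‖ := by
            rw [← Real.norm_eq_abs]
            exact norm_integral_le_integral_norm _
        _ ≤ ∫ z : Euc n, G z := integral_mono_ae hfint.norm hGint hpt
        _ = _ := hGval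
    -- main per-point facts
    have main : ∀ x ∈ Ω, Integrable (fun z : Euc n => (u x - u (x + z)) * k z) volume ∧
        LkHas k u x (∫ z : Euc n, (u x - u (x + z)) * k z) ∧
        |∫ z : Euc n, (u x - u (x + z)) * k z| ≤ C * M := by
      intro x hx
      set w : Euc n → ℝ := fun z => u x - u (x + z) with hw_def
      have hwc : Continuous w := by fun_prop
      have hw1 : ∀ z, |w z| ≤ M * ‖z‖ := by
        intro z
        have := hlip x (x + z)
        simpa using this
      have hw2 : ∀ z, |w z| ≤ 2 * M * D := by
        intro z
        calc |w z| ≤ |u x| + |u (x + z)| := abs_sub _ _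
          _ ≤ M * D + M * D := add_le_add (hubd x) (hubd _)
          _ = 2 * M * D := by ring
      obtain ⟨hint, hbound⟩ :=
        core w hwc M (2*M*D) 1 hM (by positivity) one_pos hw1 hw2
      have hfeq : (fun z : Euc n => (u x - u (x + z)) * k z) = fun z => w z * k z := rfl
      refine ⟨hint, ?_, ?_⟩
      · -- LkHas
        have hms : ∀ ε : ℝ, MeasurableSet {z : Euc n | ε ≤ ‖z‖} :=
          fun ε => measurableSet_le measurable_const measurable_norm
        have hsetc : ∀ ε : ℝ, {z : Euc n | ε ≤ ‖z‖}ᶜ = ball (0:Euc n) ε := by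
          intro ε
          ext z
          simp [mem_ball_zero_iff, not_le]
        have hdiff : ∀ ε : ℝ, 0 < ε →
            |LkTrunc k u x ε - ∫ z : Euc n, w z * k z| ≤ M * κ₂ * A₁ * ε ^ (1 - 2*s) := by
          intro ε hε
          obtain ⟨hIball, hIballval⟩ := hscaleA ε hε
          have hsplit : (∫ z in {z : Euc n | ε ≤ ‖z‖}, w z * k z) +
              ∫ z in ball (0:Euc n) ε, w z * k z = ∫ z : Euc n, w z * k z := by
            rw [← hsetc ε]
            exact integral_add_compl (hms ε) hint
          have heq2 : LkTrunc k u x ε - (∫ z : Euc n, w z * k z) =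
              -(∫ z in ball (0:Euc n) ε, w z * k z) := by
            rw [LkTrunc, ← hsplit]
            ring
          rw [heq2, abs_neg]
          calc |∫ z in ball (0:Euc n) ε, w z * k z|
              ≤ ∫ z in ball (0:Euc n) ε, ‖w z * k z‖ := by
                rw [← Real.norm_eq_abs]
                exact norm_integral_le_integral_norm _
            _ ≤ ∫ z in ball (0:Euc n) ε, M * κ₂ * ‖z‖ ^ p := by
                refine integral_mono_ae hint.norm.integrableOn
                  (hIball.const_mul (M * κ₂)) (ae_restrict_of_ae ?_)
                filter_upwards [hkb] with z hz
                obtain ⟨hzk, hz0⟩ := hz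
                rw [Real.norm_eq_abs, abs_mul]
                calc |w z| * |k z| ≤ (M * ‖z‖) * (κ₂ * ‖z‖ ^ q) :=
                      mul_le_mul (hw1 z) hzk (abs_nonneg _) (mul_nonneg hM (norm_nonneg _))
                  _ = M * κ₂ * (‖z‖ * ‖z‖ ^ q) := by ring
                  _ = M * κ₂ * ‖z‖ ^ p := by rw [hmul_pq z hz0]
            _ = M * κ₂ * A₁ * ε ^ (1 - 2*s) := by
                rw [integral_const_mul, hIballval]
                ring
        have htend0 : Tendsto (fun ε : ℝ => M * κ₂ * A₁ * ε ^ (1 - 2*s))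
            (𝓝[>] (0:ℝ)) (𝓝 0) := by
          have h1 : Tendsto (fun ε : ℝ => ε ^ (1 - 2*s)) (𝓝[>] (0:ℝ)) (𝓝 0) := by
            have hc : ContinuousAt (fun ε : ℝ => ε ^ (1 - 2*s)) 0 :=
              Real.continuousAt_rpow_const 0 _ (Or.inr (by linarith))
            have h2 := hc.tendsto
            rw [Real.zero_rpow (by linarith : (1:ℝ) - 2*s ≠ 0)] at h2
            exact h2.mono_left nhdsWithin_le_nhds
          have h3 := h1.const_mul (M * κ₂ * A₁)
          simpa [mul_comm] using h3
        show Tendsto (LkTrunc k u x) (𝓝[>] (0:ℝ)) (𝓝 (∫ z : Euc n, w z * k z))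
        rw [tendsto_iff_dist_tendsto_zero]
        refine squeeze_zero' (Eventually.of_forall fun ε => dist_nonneg) ?_ htend0
        filter_upwards [self_mem_nhdsWithin] with ε hε
        rw [Real.dist_eq]
        exact hdiff ε hε
      · refine hbound.trans ?_
        rw [Real.one_rpow, Real.one_rpow]
        have hCC2 : κ₂ * (A₁ + 2*D*B₁) ≤ C := by
          have h2 : (0:ℝ) ≤ 2 * κ₂ * (A₁ + B₁) :=
            mul_nonneg (by linarith) (add_nonneg hA₁0 hB₁0)
          rw [hC_def]
          linarith
        calc κ₂ * (M * (A₁ * 1) + 2*M*D * (B₁ * 1)) = (κ₂ * (A₁ + 2*D*B₁)) * M := by ring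
          _ ≤ C * M := mul_le_mul_of_nonneg_right hCC2 hM
    refine ⟨fun x hx => ⟨_, (main x hx).2.1⟩, fun x hx => ?_, fun x hx y hy => ?_⟩
    · rw [Lk, ((main x hx).2.1).limUnder_eq]
      exact (main x hx).2.2
    · rcases eq_or_ne x y with rfl | hxy
      · rw [sub_self, abs_zero]
        exact mul_nonneg (mul_nonneg hC0.le hM) (Real.rpow_nonneg (norm_nonneg _) _)
      · obtain ⟨hix, hhx, _⟩ := main x hx
        obtain ⟨hiy, hhy, _⟩ := main y hy
        rw [Lk, hhx.limUnder_eq, Lk, hhy.limUnder_eq]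
        set ρ : ℝ := ‖x - y‖ with hρ_def
        have hρ : 0 < ρ := by
          rw [hρ_def]
          exact norm_pos_iff.mpr (sub_ne_zero.mpr hxy)
        set w : Euc n → ℝ := fun z => (u x - u (x + z)) - (u y - u (y + z)) with hw_def
        have hwc : Continuous w := by fun_prop
        have hw1 : ∀ z, |w z| ≤ (2*M) * ‖z‖ := by
          intro z
          have h1 : |u x - u (x + z)| ≤ M * ‖z‖ := by
            have := hlip x (x + z)
            simpa using this
          have h2 : |u y - u (y + z)| ≤ M * ‖z‖ := by
            have := hlip y (y + z)
            simpa using this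
          calc |w z| ≤ |u x - u (x + z)| + |u y - u (y + z)| := abs_sub _ _
            _ ≤ 2*M*‖z‖ := by linarith
        have hw2 : ∀ z, |w z| ≤ 2*M*ρ := by
          intro z
          have hre : w z = (u x - u y) - (u (x + z) - u (y + z)) := by rw [hw_def]; ring
          have h1 : |u x - u y| ≤ M * ρ := hlip x y
          have h2 : |u (x + z) - u (y + z)| ≤ M * ρ := by
            have := hlip (x + z) (y + z)
            simpa [add_sub_add_right_eq_sub] using this
          calc |w z| = |(u x - u y) - (u (x + z) - u (y + z))| := by rw [hre]
            _ ≤ |u x - u y| + |u (x + z) - u (y + z)| := abs_sub _ _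
            _ ≤ 2*M*ρ := by linarith
        obtain ⟨hwint, hwb⟩ :=
          core w hwc (2*M) (2*M*ρ) ρ (by positivity) (by positivity) hρ hw1 hw2
        have hIeq : (∫ z : Euc n, (u x - u (x+z)) * k z) -
            (∫ z : Euc n, (u y - u (y+z)) * k z) = ∫ z : Euc n, w z * k z := by
          rw [← integral_sub hix hiy]
          congr 1
          funext z
          rw [hw_def]; ring
        rw [hIeq]
        refine hwb.trans ?_
        have hρq : ρ * ρ ^ (-(2*s)) = ρ ^ (1-2*s) := by
          rw [show (1:ℝ)-2*s = 1 + -(2*s) by ring, Real.rpow_add hρ, Real.rpow_one]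
        have hrw : κ₂ * (2*M*(A₁*ρ^(1-2*s)) + 2*M*ρ*(B₁*ρ^(-(2*s)))) =
            (2*κ₂*(A₁+B₁))*M*ρ^(1-2*s) := by
          rw [← hρq]; ring
        rw [hrw]
        have hCC : 2*κ₂*(A₁+B₁) ≤ C := by
          have h1 : 0 ≤ κ₂ * (A₁ + 2 * D * B₁) :=
            mul_nonneg hκ₂.le (add_nonneg hA₁0 (mul_nonneg (by linarith) hB₁0))
          rw [hC_def]; linarith
        have hMρ : 0 ≤ M * ρ^(1-2*s) := mul_nonneg hM (Real.rpow_nonneg hρ.le _)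
        calc (2*κ₂*(A₁+B₁))*M*ρ^(1-2*s) = (2*κ₂*(A₁+B₁))*(M*ρ^(1-2*s)) := by ring
          _ ≤ C*(M*ρ^(1-2*s)) := mul_le_mul_of_nonneg_right hCC hMρ
          _ = C*M*ρ^(1-2*s) := by ring
end
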